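/- arXiv:0912.3744 — 8 statements merged into one kernel-verified Lean document; each statement's English description precedes it below -/
import Mathlib

section
/- Under the protocol data below with Schmidt rank P equal to N, if the protocol corrects the channel faithfully and deterministically, i.e. Σ_{η∈Fin M} Σ_{k,l∈Fin P} Λ^η_{k,l} R (Λ^η_{k,l})† = Ψ₀ for the given positive-definite Choi state R, then μ_i = 1/√N for every i ∈ Fin P; that is, the pre-shared bipartite state must be maximally entangled. -/
open Matrix Kronecker ComplexOrder

local notation "⟪" x ", " y "⟫" => @inner ℂ _ _ x y

lemma core_indep {n : ℕ} (v : Fin n → Fin n → EuclideanSpace ℂ (Fin n))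
    (G : Fin n → Fin n → ℂ)
    (hgram : ∀ b b' d d', ⟪v b d, v b' d'⟫ = if b = b' then G d d' else 0)
    (i i' : Fin n) :
    ∑ b, ∑ d, ‖v b d i‖ ^ 2 = ∑ b, ∑ d, ‖v b d i'‖ ^ 2 := by
  by_cases hz : ∀ b d, v b d = 0
  · simp [hz]
  push_neg at hz
  obtain ⟨b₀, d₀, hv0⟩ := hz
  set γ : ℝ := ‖v b₀ d₀‖ ^ 2 with hγdef
  have hγpos : 0 < γ := pow_pos (norm_pos_iff.2 hv0) 2
  have hγC : (γ : ℂ) = G d₀ d₀ := by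
    have h := hgram b₀ b₀ d₀ d₀
    rw [if_pos rfl] at h
    rw [← h, inner_self_eq_norm_sq_to_K, hγdef]
    norm_cast
  have hγne : (γ : ℂ) ≠ 0 := by exact_mod_cast hγpos.ne'
  set c : ℂ := ((Real.sqrt γ : ℝ) : ℂ)⁻¹ with hc
  have hcc : c * c * (γ : ℂ) = 1 := by
    have hr : ((Real.sqrt γ)⁻¹ * (Real.sqrt γ)⁻¹ * γ : ℝ) = 1 := by
      rw [← mul_inv, Real.mul_self_sqrt hγpos.le]
      field_simp
    calc c * c * (γ : ℂ) = (((Real.sqrt γ)⁻¹ * (Real.sqrt γ)⁻¹ * γ : ℝ) : ℂ) := by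
          push_cast; ring
      _ = 1 := by rw [hr]; norm_num
  have hcconj : (starRingEnd ℂ) c = c := by
    rw [hc, ← Complex.ofReal_inv, Complex.conj_ofReal]
  set u : Fin n → EuclideanSpace ℂ (Fin n) := fun b => c • v b d₀ with hu
  have hus : ∀ b b', ⟪u b, u b'⟫ = if b = b' then 1 else 0 := by
    intro b b'
    rw [hu]
    simp only [inner_smul_left, inner_smul_right, hcconj]
    rw [hgram b b' d₀ d₀]
    split_ifs with h
    · rw [← hγC, ← mul_assoc, hcc]
    · simp
  -- rank-one structure
  have hrank : ∀ b d, v b d = (G d₀ d / (γ : ℂ)) • v b d₀ := by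
    intro b d
    set r : EuclideanSpace ℂ (Fin n) := v b d - (G d₀ d / (γ : ℂ)) • v b d₀ with hrdef
    have horth : ∀ b', ⟪v b' d₀, r⟫ = 0 := by
      intro b'
      rw [hrdef, inner_sub_right, inner_smul_right, hgram b' b d₀ d, hgram b' b d₀ d₀]
      split_ifs with h
      · rw [← hγC]; field_simp; ring
      · simp
    by_cases hr0 : r = 0
    · exact sub_eq_zero.mp (hrdef ▸ hr0)
    · exfalso
      have hrne : ((‖r‖ : ℝ) : ℂ) ≠ 0 := by
        simpa using norm_ne_zero_iff.2 hr0
      have hurth : ∀ b', ⟪u b', r⟫ = 0 := by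
        intro b'
        rw [hu]
        simp only [inner_smul_left, hcconj]
        rw [horth b', mul_zero]
      set f : (Fin n) ⊕ (Fin 1) → EuclideanSpace ℂ (Fin n) :=
        Sum.elim u (fun _ => ((‖r‖ : ℝ) : ℂ)⁻¹ • r) with hf
      have hron : Orthonormal ℂ f := by
        rw [orthonormal_iff_ite]
        intro p q
        rcases p with b1 | z1 <;> rcases q with b2 | z2
        · simpa [hf] using hus b1 b2
        · simp only [hf, Sum.elim_inl, Sum.elim_inr, inner_smul_right]
          rw [hurth b1, mul_zero]
          simp
        · simp only [hf, Sum.elim_inl, Sum.elim_inr, inner_smul_left]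
          rw [← inner_conj_symm, hurth b2]
          simp
        · rw [if_pos (by rw [Subsingleton.elim z1 z2])]
          have h1 : ‖(((‖r‖:ℝ):ℂ))⁻¹ • r‖ = 1 := by
            rw [norm_smul, norm_inv, Complex.norm_real, norm_norm]
            exact inv_mul_cancel₀ (norm_ne_zero_iff.2 hr0)
          simp only [hf, Sum.elim_inr]
          rw [inner_self_eq_norm_sq_to_K, h1]
          norm_num
      have hle := hron.linearIndependent.fintype_card_le_finrank
      rw [finrank_euclideanSpace_fin] at hle
      simp [Fintype.card_sum] at hle
  -- completeness
  have hcomp : ∀ j : Fin n, ∑ b, ‖v b d₀ j‖ ^ 2 = γ := by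
    intro j
    set W : Matrix (Fin n) (Fin n) ℂ := Matrix.of (fun b j' => v b d₀ j') with hW
    have hWW : (c • W) * (c • W)ᴴ = 1 := by
      have hWW0 : W * Wᴴ = (γ : ℂ) • 1 := by
        ext b b'
        have h := hgram b' b d₀ d₀
        simp only [PiLp.inner_apply, RCLike.inner_apply] at h
        simp only [Matrix.mul_apply, Matrix.conjTranspose_apply, Matrix.smul_apply,
          Matrix.one_apply, hW, Matrix.of_apply]
        calc ∑ j', v b d₀ j' * (starRingEnd ℂ) (v b' d₀ j')
            = ∑ j', (starRingEnd ℂ) (v b' d₀ j') * v b d₀ j' :=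
              Finset.sum_congr rfl fun _ _ => mul_comm _ _
          _ = if b' = b then G d₀ d₀ else 0 := by
              rw [← h]; exact Finset.sum_congr rfl fun _ _ => mul_comm _ _
          _ = (γ:ℂ) • (if b = b' then (1:ℂ) else 0) := by
              rw [smul_eq_mul, ← hγC]
              by_cases hbe : b = b' <;> simp [hbe, eq_comm]
      have hcstar : star c = c := hcconj
      rw [Matrix.conjTranspose_smul, hcstar, Matrix.smul_mul, Matrix.mul_smul, hWW0,
        smul_smul, smul_smul, hcc, one_smul]
    have hM1 : (c • W)ᴴ * (c • W) = 1 := mul_eq_one_comm.mp hWW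
    have hjj : ∀ a b, ((c • W)ᴴ * (c • W)) a b = (1 : Matrix (Fin n) (Fin n) ℂ) a b :=
      fun a b => by rw [hM1]
    have h1 : ∑ b, (starRingEnd ℂ) (c * v b d₀ j) * (c * v b d₀ j) = 1 := by
      have h2 := hjj j j
      simpa [Matrix.mul_apply, Matrix.conjTranspose_apply, Matrix.smul_apply, Matrix.one_apply,
        hW, smul_eq_mul] using h2
    have h3 : ∀ b, (starRingEnd ℂ) (c * v b d₀ j) * (c * v b d₀ j)
        = ((γ⁻¹ * ‖v b d₀ j‖ ^ 2 : ℝ) : ℂ) := by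
      intro b
      rw [mul_comm, Complex.mul_conj]
      rw [Complex.normSq_mul]
      have hc2 : Complex.normSq c = γ⁻¹ := by
        rw [hc, ← Complex.ofReal_inv, Complex.normSq_ofReal, ← mul_inv,
          Real.mul_self_sqrt hγpos.le]
      rw [hc2, ← Complex.sq_norm]
    rw [Finset.sum_congr rfl (fun b _ => h3 b)] at h1
    rw [← Complex.ofReal_sum] at h1
    have h4 : ∑ b, γ⁻¹ * ‖v b d₀ j‖ ^ 2 = 1 := by exact_mod_cast h1
    rw [← Finset.mul_sum] at h4
    field_simp at h4
    simpa using h4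
  -- final computation
  have main : ∀ j, ∑ b, ∑ d, ‖v b d j‖ ^ 2 = ∑ d, ‖G d₀ d / (γ:ℂ)‖ ^ 2 * γ := by
    intro j
    rw [Finset.sum_comm]
    refine Finset.sum_congr rfl fun d _ => ?_
    calc ∑ b, ‖v b d j‖ ^ 2 = ∑ b, ‖G d₀ d / (γ:ℂ)‖ ^ 2 * ‖v b d₀ j‖ ^ 2 := by
          refine Finset.sum_congr rfl fun b _ => ?_
          rw [hrank b d]
          have : ((G d₀ d / (γ:ℂ)) • v b d₀) j = (G d₀ d / (γ:ℂ)) * v b d₀ j := rfl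
          rw [this, norm_mul, mul_pow]
      _ = ‖G d₀ d / (γ:ℂ)‖ ^ 2 * ∑ b, ‖v b d₀ j‖ ^ 2 := by rw [Finset.mul_sum]
      _ = _ := by rw [hcomp j]
  rw [main i, main i']
lemma dot_sum' {m ι : Type*} [Fintype m] (s : Finset ι) (w : ι → m → ℂ) (v : m → ℂ) :
    v ⬝ᵥ (∑ a ∈ s, w a) = ∑ a ∈ s, v ⬝ᵥ w a := by
  simp only [dotProduct, Finset.sum_apply, Finset.mul_sum]
  exact Finset.sum_comm

lemma sumM_mulVec' {m ι : Type*} [Fintype m] (s : Finset ι) (f : ι → Matrix m m ℂ)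
    (x : m → ℂ) : (∑ a ∈ s, f a) *ᵥ x = ∑ a ∈ s, f a *ᵥ x := by
  ext p
  simp only [Matrix.mulVec, dotProduct, Matrix.sum_apply, Finset.sum_mul,
    Finset.sum_apply]
  exact Finset.sum_comm

/-- If a protocol (local operations `A`, `B` correlated by classical communication `η`,
pre-shared entanglement with Schmidt coefficients `μ` of Schmidt rank `P = N`)
deterministically and faithfully corrects a maximal-rank (positive-definite Choi state)
channel, then the pre-shared state is maximally entangled: `μ i = 1/√N` for all `i`. -/
theorem maximal_entanglement_necessary
    (N M P : ℕ) (hN : 2 ≤ N) (hM : 1 ≤ M) (hP : 1 ≤ P) (hPN : P = N)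
    (μ : Fin P → ℝ) (hμ : ∀ i, 0 ≤ μ i) (hμsum : ∑ i, μ i ^ 2 = 1)
    (A B : Fin M → Fin P → Fin P → Matrix (Fin N) (Fin N) ℂ)
    (hA1 : ∀ i j : Fin P, ∑ η : Fin M, ∑ k : Fin P, A η i k * (A η j k)ᴴ
        = if i = j then (1 : Matrix (Fin N) (Fin N) ℂ) else 0)
    (hA2 : ∀ i j : Fin P, ∑ η : Fin M, ∑ k : Fin P, (A η k i)ᴴ * A η k j
        = if i = j then (1 : Matrix (Fin N) (Fin N) ℂ) else 0)
    (hB1 : ∀ (η : Fin M) (i j : Fin P), ∑ k : Fin P, B η i k * (B η j k)ᴴ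
        = if i = j then (1 : Matrix (Fin N) (Fin N) ℂ) else 0)
    (hB2 : ∀ (η : Fin M) (i j : Fin P), ∑ k : Fin P, (B η k i)ᴴ * B η k j
        = if i = j then (1 : Matrix (Fin N) (Fin N) ℂ) else 0)
    (Λ : Fin M → Fin P → Fin P → Matrix (Fin N × Fin N) (Fin N × Fin N) ℂ)
    (hΛ : ∀ η k l, Λ η k l = ∑ i : Fin P, ((μ i : ℂ)) • (B η k i ⊗ₖ (A η l i)ᵀ))
    (ψ₀ : Fin N × Fin N → ℂ)
    (hψ₀ : ∀ q : Fin N × Fin N, ψ₀ q = if q.1 = q.2 then (1 / (Real.sqrt N : ℂ)) else 0)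
    (Ψ₀ : Matrix (Fin N × Fin N) (Fin N × Fin N) ℂ)
    (hΨ₀ : ∀ q q' : Fin N × Fin N, Ψ₀ q q' = ψ₀ q * (starRingEnd ℂ) (ψ₀ q'))
    (R : Matrix (Fin N × Fin N) (Fin N × Fin N) ℂ)
    (hR : R.PosDef) (hRtr : R.trace = 1)
    (hcorr : ∑ η : Fin M, ∑ k : Fin P, ∑ l : Fin P, Λ η k l * R * (Λ η k l)ᴴ = Ψ₀) :
    ∀ i : Fin P, μ i = 1 / Real.sqrt N := by
  subst hPN
  haveI : NeZero P := ⟨by omega⟩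
  -- Step A : kernel of each Λᴴ contains the orthocomplement of ψ₀
  have hzero : ∀ (x : Fin P × Fin P → ℂ), (∑ q, (starRingEnd ℂ) (ψ₀ q) * x q) = 0 →
      ∀ η k l, (Λ η k l)ᴴ *ᵥ x = 0 := by
    intro x hx η k l
    have hq0 : star x ⬝ᵥ Ψ₀ *ᵥ x = 0 := by
      calc star x ⬝ᵥ Ψ₀ *ᵥ x
          = ∑ q, ∑ q', ((starRingEnd ℂ) (x q) * ψ₀ q) * ((starRingEnd ℂ) (ψ₀ q') * x q') := by
            simp only [dotProduct, Matrix.mulVec, Pi.star_apply, Complex.star_def,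
              hΨ₀, Finset.mul_sum]
            exact Finset.sum_congr rfl fun q _ => Finset.sum_congr rfl fun q' _ => by ring
        _ = (∑ q, (starRingEnd ℂ) (x q) * ψ₀ q) * (∑ q', (starRingEnd ℂ) (ψ₀ q') * x q') :=
            (Finset.sum_mul_sum _ _ _ _).symm
        _ = 0 := by rw [hx, mul_zero]
    have e2 : ∀ (η : Fin M) (k l : Fin P),
        star ((Λ η k l)ᴴ *ᵥ x) ⬝ᵥ R *ᵥ ((Λ η k l)ᴴ *ᵥ x)
          = star x ⬝ᵥ (Λ η k l * R * (Λ η k l)ᴴ) *ᵥ x := by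
      intro η k l
      calc star ((Λ η k l)ᴴ *ᵥ x) ⬝ᵥ R *ᵥ ((Λ η k l)ᴴ *ᵥ x)
          = (star x ᵥ* (Λ η k l)) ⬝ᵥ R *ᵥ ((Λ η k l)ᴴ *ᵥ x) := by
            rw [star_mulVec, Matrix.conjTranspose_conjTranspose]
        _ = star x ⬝ᵥ (Λ η k l) *ᵥ (R *ᵥ ((Λ η k l)ᴴ *ᵥ x)) :=
            (dotProduct_mulVec _ _ _).symm
        _ = star x ⬝ᵥ (Λ η k l * R * (Λ η k l)ᴴ) *ᵥ x := by
            rw [Matrix.mulVec_mulVec, Matrix.mulVec_mulVec]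
    have hsum0 : ∑ η : Fin M, ∑ k : Fin P, ∑ l : Fin P,
        star ((Λ η k l)ᴴ *ᵥ x) ⬝ᵥ R *ᵥ ((Λ η k l)ᴴ *ᵥ x) = 0 := by
      have h := congrArg (fun (Q : Matrix (Fin P × Fin P) (Fin P × Fin P) ℂ) =>
        star x ⬝ᵥ Q *ᵥ x) hcorr
      rw [hq0] at h
      rw [← h]
      simp only [sumM_mulVec', dot_sum', e2]
    have hnn : ∀ (η : Fin M) (k l : Fin P),
        (0:ℂ) ≤ star ((Λ η k l)ᴴ *ᵥ x) ⬝ᵥ R *ᵥ ((Λ η k l)ᴴ *ᵥ x) :=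
      fun η k l => hR.posSemidef.dotProduct_mulVec_nonneg _
    have hz3 : star ((Λ η k l)ᴴ *ᵥ x) ⬝ᵥ R *ᵥ ((Λ η k l)ᴴ *ᵥ x) = 0 := by
      have h1 := (Finset.sum_eq_zero_iff_of_nonneg (fun η _ =>
        Finset.sum_nonneg fun k _ => Finset.sum_nonneg fun l _ => hnn η k l)).mp hsum0
          η (Finset.mem_univ η)
      have h2 := (Finset.sum_eq_zero_iff_of_nonneg (fun k _ =>
        Finset.sum_nonneg fun l _ => hnn η k l)).mp h1 k (Finset.mem_univ k)
      exact (Finset.sum_eq_zero_iff_of_nonneg (fun l _ => hnn η k l)).mp h2 l (Finset.mem_univ l)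
    by_contra hne
    exact (hR.dotProduct_mulVec_pos hne).ne' hz3
  -- Step B : structure of Λ
  have hP0 : ∀ (η : Fin M) (k l : Fin P) (a b c d : Fin P), a ≠ b →
      Λ η k l (a,b) (c,d) = 0 := by
    intro η k l a b c d hab
    set x0 : Fin P × Fin P → ℂ := Pi.single (a,b) 1 with hx0
    have hx : (∑ q, (starRingEnd ℂ) (ψ₀ q) * x0 q) = 0 := by
      rw [hx0]
      rw [Finset.sum_eq_single ((a,b) : Fin P × Fin P)]
      · simp [hψ₀, hab]
      · intro q _ hq
        rw [Pi.single_apply, if_neg hq, mul_zero]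
      · intro h; exact absurd (Finset.mem_univ _) h
    have h0 := hzero _ hx η k l
    have h1 := congrFun h0 (c,d)
    rw [hx0] at h1
    simp only [Matrix.mulVec_single_one, Matrix.col_apply, Matrix.conjTranspose_apply, mul_one, Pi.zero_apply] at h1
    exact star_eq_zero.mp h1
  have hdiag : ∀ (η : Fin M) (k l : Fin P) (a b c d : Fin P),
      Λ η k l (a,a) (c,d) = Λ η k l (b,b) (c,d) := by
    intro η k l a b c d
    set xa : Fin P × Fin P → ℂ := Pi.single (a,a) 1 with hxa
    set xb : Fin P × Fin P → ℂ := Pi.single (b,b) 1 with hxb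
    have hx : (∑ q, (starRingEnd ℂ) (ψ₀ q) * (xa - xb) q) = 0 := by
      simp only [Pi.sub_apply, mul_sub, Finset.sum_sub_distrib]
      have e1 : (∑ q, (starRingEnd ℂ) (ψ₀ q) * xa q)
          = (starRingEnd ℂ) (ψ₀ (a,a)) := by
        rw [hxa]
        rw [Finset.sum_eq_single ((a,a) : Fin P × Fin P)]
        · simp
        · intro q _ hq; rw [Pi.single_apply, if_neg hq, mul_zero]
        · intro h; exact absurd (Finset.mem_univ _) h
      have e2 : (∑ q, (starRingEnd ℂ) (ψ₀ q) * xb q)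
          = (starRingEnd ℂ) (ψ₀ (b,b)) := by
        rw [hxb]
        rw [Finset.sum_eq_single ((b,b) : Fin P × Fin P)]
        · simp
        · intro q _ hq; rw [Pi.single_apply, if_neg hq, mul_zero]
        · intro h; exact absurd (Finset.mem_univ _) h
      rw [e1, e2, hψ₀, hψ₀]
      simp
    have h0 := hzero _ hx η k l
    have h1 := congrFun h0 (c,d)
    rw [Matrix.mulVec_sub] at h0
    have h1' := congrFun h0 (c,d)
    rw [hxa, hxb] at h1'
    simp only [Pi.sub_apply, Matrix.mulVec_single_one, Matrix.col_apply, Matrix.conjTranspose_apply, mul_one,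
      Pi.zero_apply] at h1'
    have h2 := sub_eq_zero.mp h1'
    exact star_injective h2
  -- the reduced amplitude t
  set t : Fin M → Fin P → Fin P → Fin P → Fin P → ℂ :=
    fun η k l c d => Λ η k l ((0 : Fin P), (0 : Fin P)) (c,d) with ht
  have hLam : ∀ (η : Fin M) (k l : Fin P) (a b c d : Fin P),
      Λ η k l (a,b) (c,d) = if a = b then t η k l c d else 0 := by
    intro η k l a b c d
    by_cases hab : a = b
    · subst hab
      rw [if_pos rfl, ht]
      exact hdiag η k l a 0 c d
    · rw [if_neg hab]
      exact hP0 η k l a b c d hab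
  -- Step C : entries of Λ
  have hE : ∀ (η : Fin M) (k l : Fin P) (a b c d : Fin P),
      Λ η k l (a,b) (c,d) = ∑ i, (μ i:ℂ) * (B η k i a c * A η l i d b) := by
    intro η k l a b c d
    rw [hΛ]
    simp [Matrix.sum_apply, Matrix.kroneckerMap_apply, Matrix.transpose_apply, mul_assoc]
  -- Step D : the key Gram identity
  have hkey : ∀ (η : Fin M) (l : Fin P) (b b' d d' : Fin P),
      ∑ i, (μ i:ℂ)^2 * (A η l i d b * (starRingEnd ℂ) (A η l i d' b'))
        = if b = b' then ∑ k, t η k l 0 d * (starRingEnd ℂ) (t η k l 0 d') else 0 := by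
    intro η l b b' d d'
    have hBsum : ∀ i j : Fin P,
        (∑ k, ∑ a, B η k i a 0 * (starRingEnd ℂ) (B η k j a 0)) = if i = j then 1 else 0 := by
      intro i j
      have h00 : (∑ k, (B η k j)ᴴ * B η k i) 0 0
          = (if j = i then (1 : Matrix (Fin P) (Fin P) ℂ) else 0) 0 0 := by rw [hB2]
      simp only [Matrix.sum_apply, Matrix.mul_apply, Matrix.conjTranspose_apply] at h00
      calc ∑ k, ∑ a, B η k i a 0 * (starRingEnd ℂ) (B η k j a 0)
          = ∑ k, ∑ a, star (B η k j a 0) * B η k i a 0 :=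
            Finset.sum_congr rfl fun _ _ => Finset.sum_congr rfl fun _ _ => mul_comm _ _
        _ = (if j = i then (1 : Matrix (Fin P) (Fin P) ℂ) else 0) 0 0 := h00
        _ = if i = j then 1 else 0 := by
            by_cases hij : i = j
            · rw [if_pos hij.symm, if_pos hij, Matrix.one_apply_eq]
            · rw [if_neg (fun hh => hij hh.symm), if_neg hij, Matrix.zero_apply]
    have expand : ∀ k a : Fin P,
        Λ η k l (a,b) (0,d) * (starRingEnd ℂ) (Λ η k l (a,b') (0,d'))
          = ∑ i, ∑ j, ((μ i:ℂ) * (μ j:ℂ) * (A η l i d b * (starRingEnd ℂ) (A η l j d' b')))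
              * (B η k i a 0 * (starRingEnd ℂ) (B η k j a 0)) := by
      intro k a
      rw [hE, hE, map_sum, Finset.sum_mul_sum]
      refine Finset.sum_congr rfl fun i _ => Finset.sum_congr rfl fun j _ => ?_
      simp only [_root_.map_mul, Complex.conj_ofReal]
      ring
    have way1 : ∑ k, ∑ a, Λ η k l (a,b) (0,d) * (starRingEnd ℂ) (Λ η k l (a,b') (0,d'))
        = if b = b' then ∑ k, t η k l 0 d * (starRingEnd ℂ) (t η k l 0 d') else 0 := by
      by_cases hbb : b = b'
      · subst hbb
        rw [if_pos rfl]
        refine Finset.sum_congr rfl fun k _ => ?_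
        calc ∑ a, Λ η k l (a,b) (0,d) * (starRingEnd ℂ) (Λ η k l (a,b) (0,d'))
            = ∑ a, if a = b then t η k l 0 d * (starRingEnd ℂ) (t η k l 0 d') else 0 := by
              refine Finset.sum_congr rfl fun a _ => ?_
              rw [hLam, hLam]
              by_cases h : a = b
              · rw [if_pos h, if_pos h, if_pos h]
              · rw [if_neg h, if_neg h, if_neg h, zero_mul]
          _ = t η k l 0 d * (starRingEnd ℂ) (t η k l 0 d') := by
              simp [Finset.sum_ite_eq']
      · rw [if_neg hbb]
        refine Finset.sum_eq_zero fun k _ => Finset.sum_eq_zero fun a _ => ?_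
        rw [hLam, hLam]
        by_cases h1 : a = b
        · rw [if_pos h1, if_neg (fun h2 => hbb (h1 ▸ h2 : b = b'))]
          simp
        · rw [if_neg h1, zero_mul]
    have swap4 : ∀ (F : Fin P → Fin P → Fin P → Fin P → ℂ),
        (∑ k, ∑ a, ∑ i, ∑ j, F k a i j) = ∑ i, ∑ j, ∑ k, ∑ a, F k a i j := by
      intro F
      calc (∑ k, ∑ a, ∑ i, ∑ j, F k a i j)
          = ∑ k, ∑ i, ∑ a, ∑ j, F k a i j :=
            Finset.sum_congr rfl fun k _ => Finset.sum_comm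
        _ = ∑ i, ∑ k, ∑ a, ∑ j, F k a i j := Finset.sum_comm
        _ = ∑ i, ∑ k, ∑ j, ∑ a, F k a i j :=
            Finset.sum_congr rfl fun i _ => Finset.sum_congr rfl fun k _ => Finset.sum_comm
        _ = ∑ i, ∑ j, ∑ k, ∑ a, F k a i j :=
            Finset.sum_congr rfl fun i _ => Finset.sum_comm
    have way2 : ∑ k, ∑ a, Λ η k l (a,b) (0,d) * (starRingEnd ℂ) (Λ η k l (a,b') (0,d'))
        = ∑ i, (μ i:ℂ)^2 * (A η l i d b * (starRingEnd ℂ) (A η l i d' b')) := by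
      calc ∑ k, ∑ a, Λ η k l (a,b) (0,d) * (starRingEnd ℂ) (Λ η k l (a,b') (0,d'))
          = ∑ k, ∑ a, ∑ i, ∑ j,
              ((μ i:ℂ) * (μ j:ℂ) * (A η l i d b * (starRingEnd ℂ) (A η l j d' b')))
                * (B η k i a 0 * (starRingEnd ℂ) (B η k j a 0)) := by
            exact Finset.sum_congr rfl fun k _ => Finset.sum_congr rfl fun a _ => expand k a
        _ = ∑ i, ∑ j, ∑ k, ∑ a,
              ((μ i:ℂ) * (μ j:ℂ) * (A η l i d b * (starRingEnd ℂ) (A η l j d' b')))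
                * (B η k i a 0 * (starRingEnd ℂ) (B η k j a 0)) := swap4 _
        _ = ∑ i, ∑ j, ((μ i:ℂ) * (μ j:ℂ) * (A η l i d b * (starRingEnd ℂ) (A η l j d' b')))
              * (∑ k, ∑ a, B η k i a 0 * (starRingEnd ℂ) (B η k j a 0)) := by
            refine Finset.sum_congr rfl fun i _ => Finset.sum_congr rfl fun j _ => ?_
            rw [Finset.mul_sum]
            refine Finset.sum_congr rfl fun k _ => ?_
            rw [Finset.mul_sum]
        _ = ∑ i, ∑ j, ((μ i:ℂ) * (μ j:ℂ) * (A η l i d b * (starRingEnd ℂ) (A η l j d' b')))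
              * (if i = j then 1 else 0) := by
            refine Finset.sum_congr rfl fun i _ => Finset.sum_congr rfl fun j _ => ?_
            rw [hBsum i j]
        _ = ∑ i, (μ i:ℂ)^2 * (A η l i d b * (starRingEnd ℂ) (A η l i d' b')) := by
            refine Finset.sum_congr rfl fun i _ => ?_
            simp only [mul_ite, mul_one, mul_zero, Finset.sum_ite_eq, Finset.mem_univ, if_pos]
            ring
    rw [← way2, way1]
  -- trace normalization from hA2
  have hTr : ∀ i : Fin P, ∑ η : Fin M, ∑ l : Fin P, ∑ b : Fin P, ∑ d : Fin P,
      ‖A η l i d b‖ ^ 2 = (P:ℝ) := by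
    intro i
    have h := congrArg Matrix.trace (hA2 i i)
    rw [if_pos rfl, Matrix.trace_one] at h
    simp only [Matrix.trace, Matrix.diag_apply, Matrix.sum_apply, Matrix.mul_apply,
      Matrix.conjTranspose_apply, Fintype.card_fin] at h
    have hsums : ∑ x : Fin P, ∑ η : Fin M, ∑ k : Fin P, ∑ j : Fin P,
        star (A η k i j x) * A η k i j x
        = ((∑ η : Fin M, ∑ l : Fin P, ∑ b : Fin P, ∑ d : Fin P,
            ‖A η l i d b‖ ^ 2 : ℝ) : ℂ) := by
      push_cast
      rw [Finset.sum_comm]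
      apply Finset.sum_congr rfl
      intro η _
      rw [Finset.sum_comm]
      apply Finset.sum_congr rfl
      intro l _
      apply Finset.sum_congr rfl
      intro b _
      apply Finset.sum_congr rfl
      intro d _
      rw [Complex.star_def, mul_comm, Complex.mul_conj, Complex.normSq_eq_norm_sq]
      norm_cast
    rw [hsums] at h
    exact_mod_cast h
  -- apply the core lemma per (η, l)
  have hInd : ∀ (i i' : Fin P) (η : Fin M) (l : Fin P),
      (∑ b : Fin P, ∑ d : Fin P, ‖(μ i:ℂ) * A η l i d b‖ ^ 2)
        = ∑ b : Fin P, ∑ d : Fin P, ‖(μ i':ℂ) * A η l i' d b‖ ^ 2 := by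
    intro i i' η l
    set v : Fin P → Fin P → EuclideanSpace ℂ (Fin P) :=
      fun b d => WithLp.toLp 2 (fun j => (μ j:ℂ) * A η l j d b) with hv
    have hgram : ∀ b b' d d', ⟪v b d, v b' d'⟫
        = if b = b' then (∑ k, (starRingEnd ℂ) (t η k l 0 d) * t η k l 0 d') else 0 := by
      intro b b' d d'
      have hk := hkey η l b b' d d'
      calc ⟪v b d, v b' d'⟫
          = ∑ j, (starRingEnd ℂ) ((μ j:ℂ) * A η l j d b) * ((μ j:ℂ) * A η l j d' b') := by
            rw [hv]
            simp [PiLp.inner_apply, RCLike.inner_apply]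
            exact Finset.sum_congr rfl fun _ _ => mul_comm _ _
        _ = (starRingEnd ℂ) (∑ j, (μ j:ℂ)^2 * (A η l j d b * (starRingEnd ℂ) (A η l j d' b'))) := by
            rw [map_sum]
            refine Finset.sum_congr rfl fun j _ => ?_
            simp only [_root_.map_mul, map_pow, Complex.conj_ofReal, Complex.conj_conj]
            ring
        _ = (starRingEnd ℂ) (if b = b' then
              ∑ k, t η k l 0 d * (starRingEnd ℂ) (t η k l 0 d') else 0) := by rw [hk]
        _ = if b = b' then (∑ k, (starRingEnd ℂ) (t η k l 0 d) * t η k l 0 d') else 0 := by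
            by_cases hbb : b = b'
            · rw [if_pos hbb, if_pos hbb, map_sum]
              refine Finset.sum_congr rfl fun k _ => ?_
              rw [_root_.map_mul, Complex.conj_conj]
            · rw [if_neg hbb, if_neg hbb, map_zero]
    exact core_indep v _ hgram i i'
  -- conclude equality of all μ i ^ 2
  have h1 : ∀ i : Fin P, ∑ η : Fin M, ∑ l : Fin P, ∑ b : Fin P, ∑ d : Fin P,
      ‖(μ i:ℂ) * A η l i d b‖ ^ 2 = μ i ^ 2 * (P:ℝ) := by
    intro i
    have e : ∀ (η : Fin M) (l b d : Fin P),
        ‖(μ i:ℂ) * A η l i d b‖ ^ 2 = μ i ^ 2 * ‖A η l i d b‖ ^ 2 := by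
      intro η l b d
      rw [norm_mul, mul_pow, Complex.norm_real, Real.norm_eq_abs, sq_abs]
    calc ∑ η : Fin M, ∑ l : Fin P, ∑ b : Fin P, ∑ d : Fin P, ‖(μ i:ℂ) * A η l i d b‖ ^ 2
        = ∑ η : Fin M, ∑ l : Fin P, ∑ b : Fin P, ∑ d : Fin P, μ i ^ 2 * ‖A η l i d b‖ ^ 2 := by
          exact Finset.sum_congr rfl fun η _ => Finset.sum_congr rfl fun l _ =>
            Finset.sum_congr rfl fun b _ => Finset.sum_congr rfl fun d _ => e η l b d
      _ = μ i ^ 2 * ∑ η : Fin M, ∑ l : Fin P, ∑ b : Fin P, ∑ d : Fin P, ‖A η l i d b‖ ^ 2 := by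
          simp only [Finset.mul_sum]
      _ = μ i ^ 2 * (P:ℝ) := by rw [hTr i]
  have hμeq : ∀ i i' : Fin P, μ i ^ 2 = μ i' ^ 2 := by
    intro i i'
    have h2 : μ i ^ 2 * (P:ℝ) = μ i' ^ 2 * (P:ℝ) := by
      rw [← h1 i, ← h1 i']
      exact Finset.sum_congr rfl fun η _ => Finset.sum_congr rfl fun l _ => hInd i i' η l
    have hPne : (P:ℝ) ≠ 0 := Nat.cast_ne_zero.mpr (by omega)
    exact mul_right_cancel₀ hPne h2
  intro i
  have hsum1 : μ i ^ 2 * (P:ℝ) = 1 := by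
    calc μ i ^ 2 * (P:ℝ) = ∑ _i' : Fin P, μ i ^ 2 := by
          rw [Finset.sum_const, Finset.card_univ, Fintype.card_fin, nsmul_eq_mul, mul_comm]
      _ = ∑ i' : Fin P, μ i' ^ 2 := Finset.sum_congr rfl fun i' _ => hμeq i i'
      _ = 1 := hμsum
  have hval : μ i ^ 2 = 1 / (P:ℝ) := by
    field_simp
    linarith [hsum1]
  have : μ i = Real.sqrt (1 / (P:ℝ)) := by
    rw [← hval, Real.sqrt_sq (hμ i)]
  rw [this, one_div, Real.sqrt_inv, one_div]
end

section
/- Under the protocol data below, if the protocol corrects the channel faithfully and deterministically, i.e. Σ_{η∈Fin M} Σ_{k,l∈Fin P} Λ^η_{k,l} R (Λ^η_{k,l})† = Ψ₀ for the given positive-definite Choi state R, then the Schmidt coefficients satisfy Σ_{i∈Fin P} μ_i ≥ √N. -/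
open Matrix Kronecker ComplexOrder

lemma kron_conjT {m n : Type*} [Fintype m] [Fintype n]
    (X : Matrix m m ℂ) (Y : Matrix n n ℂ) : (X ⊗ₖ Y)ᴴ = Xᴴ ⊗ₖ Yᴴ := by
  ext p q
  simp [Matrix.conjTranspose_apply, Matrix.kroneckerMap_apply, star_mul']

lemma quad_diag {n : Type*} [Fintype n] (R M : Matrix n n ℂ) (p : n) :
    (M * R * Mᴴ) p p
      = star (fun q => (starRingEnd ℂ) (M p q)) ⬝ᵥ R *ᵥ (fun q => (starRingEnd ℂ) (M p q)) := by
  simp only [Matrix.mul_apply, Matrix.conjTranspose_apply, dotProduct, Matrix.mulVec,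
    Pi.star_apply, RingHomCompTriple.comp_apply, Finset.sum_mul, Finset.mul_sum]
  rw [Finset.sum_comm]
  refine Finset.sum_congr rfl fun q _ => Finset.sum_congr rfl fun q' _ => ?_
  simp [mul_comm, mul_assoc, mul_left_comm]

lemma csum_zero {ι : Type*} [Fintype ι] {f : ι → ℂ} (h0 : ∀ i, 0 ≤ f i)
    (h : ∑ i, f i = 0) : ∀ i, f i = 0 :=
  fun i => (Finset.sum_eq_zero_iff_of_nonneg (fun i _ => h0 i)).mp h i (Finset.mem_univ i)

lemma trace_transpose_mul_conjT {n : Type*} [Fintype n] (X Y : Matrix n n ℂ) :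
    Matrix.trace (Xᵀ * (Yᵀ)ᴴ) = Matrix.trace (Yᴴ * X) := by
  simp only [Matrix.trace, Matrix.diag, Matrix.mul_apply, Matrix.conjTranspose_apply,
    Matrix.transpose_apply]
  exact Finset.sum_congr rfl fun a _ => Finset.sum_congr rfl fun b _ => mul_comm _ _

lemma weighted_cs {P : ℕ} (μ : Fin P → ℝ) (hμ : ∀ i, 0 ≤ μ i) (v : Fin P → ℝ) :
    (∑ i, μ i * v i)^2 ≤ (∑ i, μ i) * ∑ i, μ i * (v i)^2 := by
  have h := Finset.sum_mul_sq_le_sq_mul_sq Finset.univ (fun i => Real.sqrt (μ i))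
    (fun i => Real.sqrt (μ i) * v i)
  have e1 : ∑ i, Real.sqrt (μ i) * (Real.sqrt (μ i) * v i) = ∑ i, μ i * v i :=
    Finset.sum_congr rfl fun i _ => by rw [← mul_assoc, Real.mul_self_sqrt (hμ i)]
  have e2 : ∑ i, Real.sqrt (μ i)^2 = ∑ i, μ i :=
    Finset.sum_congr rfl fun i _ => Real.sq_sqrt (hμ i)
  have e3 : ∑ i, (Real.sqrt (μ i) * v i)^2 = ∑ i, μ i * (v i)^2 :=
    Finset.sum_congr rfl fun i _ => by rw [mul_pow, Real.sq_sqrt (hμ i)]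
  rw [e1, e2, e3] at h
  exact h

lemma sum_prod_factor {K L C D : Type*} [Fintype K] [Fintype L] [Fintype C] [Fintype D]
    (b : K → C → ℝ) (a : L → D → ℝ) :
    ∑ k : K, ∑ l : L, ∑ c : C, ∑ d : D, b k c * a l d
      = (∑ k, ∑ c, b k c) * (∑ l, ∑ d, a l d) := by
  calc ∑ k : K, ∑ l : L, ∑ c : C, ∑ d : D, b k c * a l d
      = ∑ k : K, ∑ l : L, (∑ c, b k c) * (∑ d, a l d) :=
        Finset.sum_congr rfl fun k _ => Finset.sum_congr rfl fun l _ =>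
          (Finset.sum_mul_sum _ _ _ _).symm
    _ = (∑ k, ∑ c, b k c) * (∑ l, ∑ d, a l d) := (Finset.sum_mul_sum _ _ _ _).symm

lemma sum_comm5 {K L C D I : Type*} [Fintype K] [Fintype L] [Fintype C] [Fintype D] [Fintype I]
    (F : K → L → C → D → I → ℝ) :
    ∑ k, ∑ l, ∑ c, ∑ d, ∑ i, F k l c d i = ∑ i, ∑ k, ∑ l, ∑ c, ∑ d, F k l c d i := by
  calc ∑ k, ∑ l, ∑ c, ∑ d, ∑ i, F k l c d i
      = ∑ k, ∑ l, ∑ c, ∑ i, ∑ d, F k l c d i :=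
        Finset.sum_congr rfl fun k _ => Finset.sum_congr rfl fun l _ =>
          Finset.sum_congr rfl fun c _ => Finset.sum_comm
    _ = ∑ k, ∑ l, ∑ i, ∑ c, ∑ d, F k l c d i :=
        Finset.sum_congr rfl fun k _ => Finset.sum_congr rfl fun l _ => Finset.sum_comm
    _ = ∑ k, ∑ i, ∑ l, ∑ c, ∑ d, F k l c d i :=
        Finset.sum_congr rfl fun k _ => Finset.sum_comm
    _ = ∑ i, ∑ k, ∑ l, ∑ c, ∑ d, F k l c d i := Finset.sum_comm

/-- If a protocol deterministically and faithfully corrects a maximal-rank channel,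
then the Schmidt coefficients of the pre-shared state satisfy `∑ i, μ i ≥ √N`. -/
theorem schmidt_sum_lower_bound
    (N M P : ℕ) (hN : 2 ≤ N) (hM : 1 ≤ M) (hP : 1 ≤ P)
    (μ : Fin P → ℝ) (hμ : ∀ i, 0 ≤ μ i) (hμsum : ∑ i, μ i ^ 2 = 1)
    (A B : Fin M → Fin P → Fin P → Matrix (Fin N) (Fin N) ℂ)
    (hA1 : ∀ i j : Fin P, ∑ η : Fin M, ∑ k : Fin P, A η i k * (A η j k)ᴴ
        = if i = j then (1 : Matrix (Fin N) (Fin N) ℂ) else 0)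
    (hA2 : ∀ i j : Fin P, ∑ η : Fin M, ∑ k : Fin P, (A η k i)ᴴ * A η k j
        = if i = j then (1 : Matrix (Fin N) (Fin N) ℂ) else 0)
    (hB1 : ∀ (η : Fin M) (i j : Fin P), ∑ k : Fin P, B η i k * (B η j k)ᴴ
        = if i = j then (1 : Matrix (Fin N) (Fin N) ℂ) else 0)
    (hB2 : ∀ (η : Fin M) (i j : Fin P), ∑ k : Fin P, (B η k i)ᴴ * B η k j
        = if i = j then (1 : Matrix (Fin N) (Fin N) ℂ) else 0)
    (Λ : Fin M → Fin P → Fin P → Matrix (Fin N × Fin N) (Fin N × Fin N) ℂ)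
    (hΛ : ∀ η k l, Λ η k l = ∑ i : Fin P, ((μ i : ℂ)) • (B η k i ⊗ₖ (A η l i)ᵀ))
    (ψ₀ : Fin N × Fin N → ℂ)
    (hψ₀ : ∀ q : Fin N × Fin N, ψ₀ q = if q.1 = q.2 then (1 / (Real.sqrt N : ℂ)) else 0)
    (Ψ₀ : Matrix (Fin N × Fin N) (Fin N × Fin N) ℂ)
    (hΨ₀ : ∀ q q' : Fin N × Fin N, Ψ₀ q q' = ψ₀ q * (starRingEnd ℂ) (ψ₀ q'))
    (R : Matrix (Fin N × Fin N) (Fin N × Fin N) ℂ)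
    (hR : R.PosDef) (hRtr : R.trace = 1)
    (hcorr : ∑ η : Fin M, ∑ k : Fin P, ∑ l : Fin P, Λ η k l * R * (Λ η k l)ᴴ = Ψ₀) :
    Real.sqrt N ≤ ∑ i, μ i := by
  have hN0 : (0:ℝ) < N := by positivity
  have hNne : (N:ℕ) ≠ 0 := by omega
  have hNC : (N:ℂ) ≠ 0 := by exact_mod_cast (Nat.cast_ne_zero (R := ℂ)).2 hNne
  have hs0 : (0:ℝ) ≤ ∑ i, μ i := Finset.sum_nonneg fun i _ => hμ i
  -- entries of Ψ₀
  have hsqrtN : ((Real.sqrt N : ℝ) : ℂ) * ((Real.sqrt N : ℝ) : ℂ) = (N : ℂ) := by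
    rw [← Complex.ofReal_mul, Real.mul_self_sqrt hN0.le]
    norm_num
  have hΨent : ∀ p r : Fin N × Fin N,
      Ψ₀ p r = if p.1 = p.2 ∧ r.1 = r.2 then (N:ℂ)⁻¹ else 0 := by
    intro p r
    rw [hΨ₀, hψ₀, hψ₀]
    by_cases h1 : p.1 = p.2 <;> by_cases h2 : r.1 = r.2 <;> simp [h1, h2]
    rw [← hsqrtN]
    rw [mul_inv]
  -- Ψ₀ is a projection
  have hproj : Ψ₀ * Ψ₀ = Ψ₀ := by
    ext p q
    rw [Matrix.mul_apply]
    simp only [hΨent]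
    by_cases hp : p.1 = p.2 <;> by_cases hq : q.1 = q.2 <;>
      simp [hp, hq, Fintype.sum_prod_type, Finset.sum_ite_eq]
    field_simp
  -- structure: Λ = Ψ₀ * Λ
  have hQ0 : ∀ η k l, Ψ₀ * Λ η k l = Λ η k l := by
    have hQΨ : ((1 : Matrix (Fin N × Fin N) (Fin N × Fin N) ℂ) - Ψ₀) * Ψ₀ = 0 := by
      rw [sub_mul, one_mul, hproj, sub_self]
    set Q : Matrix (Fin N × Fin N) (Fin N × Fin N) ℂ := 1 - Ψ₀ with hQdef
    have hterm : ∀ η k l, (Q * Λ η k l) * R * (Q * Λ η k l)ᴴ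
        = Q * (Λ η k l * R * (Λ η k l)ᴴ) * Qᴴ := by
      intro η k l
      rw [Matrix.conjTranspose_mul]
      simp only [Matrix.mul_assoc]
    have htot : ∑ η, ∑ k, ∑ l, (Q * Λ η k l) * R * (Q * Λ η k l)ᴴ = 0 := by
      simp only [hterm, ← Finset.sum_mul, ← Finset.mul_sum]
      rw [hcorr, hQΨ, Matrix.zero_mul]
    have hzero : ∀ η k l, Q * Λ η k l = 0 := by
      intro η k l
      ext p q
      have h0 : ∀ (t : Fin M) (u v : Fin P),
          (0:ℂ) ≤ ((Q * Λ t u v) * R * (Q * Λ t u v)ᴴ) p p := by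
        intro t u v
        rw [quad_diag]
        exact hR.posSemidef.dotProduct_mulVec_nonneg _
      have hsum0 : ∑ t, ∑ u, ∑ v, ((Q * Λ t u v) * R * (Q * Λ t u v)ᴴ) p p = 0 := by
        have h := congrArg (fun X : Matrix (Fin N × Fin N) (Fin N × Fin N) ℂ => X p p) htot
        simpa [Matrix.sum_apply] using h
      have h1 := csum_zero
        (fun t => Finset.sum_nonneg fun u _ => Finset.sum_nonneg fun v _ => h0 t u v) hsum0 η
      have h2 := csum_zero (fun u => Finset.sum_nonneg fun v _ => h0 η u v) h1 k
      have h3 := csum_zero (fun v => h0 η k v) h2 l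
      by_contra hne
      have hxne : (fun q' => (starRingEnd ℂ) ((Q * Λ η k l) p q')) ≠ 0 := by
        intro hfun
        have h4 := congrFun hfun q
        simp only [Pi.zero_apply, map_eq_zero] at h4
        exact hne (by simpa using h4)
      have hpos := hR.dotProduct_mulVec_pos hxne
      rw [← quad_diag] at hpos
      rw [h3] at hpos
      exact lt_irrefl _ hpos
    intro η k l
    have h := hzero η k l
    rw [hQdef, sub_mul, one_mul, sub_eq_zero] at h
    exact h.symm
  -- the collapsed row vector
  set D : Fin M → Fin P → Fin P → (Fin N × Fin N) → ℂ :=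
    fun η k l q => ∑ e : Fin N, Λ η k l (e, e) q with hD
  have hstruct : ∀ η k l (a b : Fin N) (q : Fin N × Fin N),
      Λ η k l (a, b) q = (if a = b then (N:ℂ)⁻¹ else 0) * D η k l q := by
    intro η k l a b q
    conv_lhs => rw [← hQ0 η k l]
    rw [Matrix.mul_apply]
    by_cases hab : a = b
    · have key : ∀ j : Fin N × Fin N, Ψ₀ (a, b) j * Λ η k l j q
          = if j.1 = j.2 then (N:ℂ)⁻¹ * Λ η k l j q else 0 := by
        intro j
        rw [hΨent]
        by_cases hj : j.1 = j.2 <;> simp [hab, hj]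
      rw [if_pos hab]
      calc ∑ j : Fin N × Fin N, Ψ₀ (a, b) j * Λ η k l j q
          = ∑ e : Fin N, ∑ f : Fin N, if e = f then (N:ℂ)⁻¹ * Λ η k l (e, f) q else 0 := by
            rw [Fintype.sum_prod_type]
            exact Finset.sum_congr rfl fun e _ => Finset.sum_congr rfl fun f _ => key (e, f)
        _ = ∑ e : Fin N, (N:ℂ)⁻¹ * Λ η k l (e, e) q := by
            refine Finset.sum_congr rfl fun e _ => ?_
            simp [Finset.sum_ite_eq]
        _ = (N:ℂ)⁻¹ * D η k l q := by
            rw [← Finset.mul_sum]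
    · have key : ∀ j : Fin N × Fin N, Ψ₀ (a, b) j * Λ η k l j q = 0 := by
        intro j
        rw [hΨent]
        simp [hab]
      rw [if_neg hab, zero_mul]
      exact Finset.sum_eq_zero fun j _ => key j
  -- raw entries of Λ
  have hent : ∀ η k l (a b c d : Fin N),
      Λ η k l (a, b) (c, d) = ∑ i, (μ i : ℂ) * (B η k i a c * A η l i d b) := by
    intro η k l a b c d
    rw [hΛ]
    simp [Matrix.sum_apply, Matrix.kroneckerMap_apply, mul_assoc]
  -- trace expansion via kronecker structure
  have htr1 : ∀ η k l, Matrix.trace (Λ η k l * (Λ η k l)ᴴ)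
      = ∑ i, ∑ j, ((μ i : ℂ) * (μ j : ℂ)) *
          (Matrix.trace ((B η k j)ᴴ * B η k i) * Matrix.trace ((A η l j)ᴴ * A η l i)) := by
    intro η k l
    rw [hΛ, Matrix.conjTranspose_sum, Finset.sum_mul_sum, Matrix.trace_sum]
    refine Finset.sum_congr rfl fun i _ => ?_
    rw [Matrix.trace_sum]
    refine Finset.sum_congr rfl fun j _ => ?_
    rw [Matrix.conjTranspose_smul, Matrix.smul_mul, Matrix.mul_smul, Matrix.trace_smul,
      Matrix.trace_smul]
    rw [kron_conjT, ← Matrix.mul_kronecker_mul, Matrix.trace_kronecker]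
    rw [Matrix.trace_mul_comm (B η k i), trace_transpose_mul_conjT]
    simp only [smul_eq_mul, Complex.star_def, Complex.conj_ofReal]
    ring
  have hBtr : ∀ η i j, ∑ k, Matrix.trace ((B η k j)ᴴ * B η k i)
      = if i = j then (N:ℂ) else 0 := by
    intro η i j
    rw [← Matrix.trace_sum, hB2 η j i]
    by_cases h : i = j
    · subst h; simp [Matrix.trace_one]
    · rw [if_neg (fun hh : j = i => h hh.symm), if_neg h, Matrix.trace_zero]
  have hAtr : ∀ i j, ∑ η, ∑ l, Matrix.trace ((A η l j)ᴴ * A η l i)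
      = if i = j then (N:ℂ) else 0 := by
    intro i j
    have h : ∑ η, ∑ l, Matrix.trace ((A η l j)ᴴ * A η l i)
        = Matrix.trace (∑ η, ∑ l, (A η l j)ᴴ * A η l i) := by
      simp [Matrix.trace_sum]
    rw [h, hA2 j i]
    by_cases h' : i = j
    · subst h'; simp [Matrix.trace_one]
    · rw [if_neg (fun hh : j = i => h' hh.symm), if_neg h', Matrix.trace_zero]
  -- total Frobenius norm computation
  have htot2 : ∑ η, ∑ k, ∑ l, Matrix.trace (Λ η k l * (Λ η k l)ᴴ) = (N:ℂ)^2 := by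
    have hstep : ∀ η l, ∑ k, Matrix.trace (Λ η k l * (Λ η k l)ᴴ)
        = ∑ i, ((μ i : ℂ) * (μ i : ℂ)) * ((N:ℂ) * Matrix.trace ((A η l i)ᴴ * A η l i)) := by
      intro η l
      simp only [htr1]
      rw [Finset.sum_comm]
      refine Finset.sum_congr rfl fun i _ => ?_
      rw [Finset.sum_comm]
      calc ∑ j, ∑ k, ((μ i : ℂ) * (μ j : ℂ)) *
              (Matrix.trace ((B η k j)ᴴ * B η k i) * Matrix.trace ((A η l j)ᴴ * A η l i))
          = ∑ j, ((μ i : ℂ) * (μ j : ℂ)) *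
              ((∑ k, Matrix.trace ((B η k j)ᴴ * B η k i)) * Matrix.trace ((A η l j)ᴴ * A η l i)) := by
            refine Finset.sum_congr rfl fun j _ => ?_
            rw [Finset.sum_mul, ← Finset.mul_sum]
        _ = ∑ j, ((μ i : ℂ) * (μ j : ℂ)) *
              ((if i = j then (N:ℂ) else 0) * Matrix.trace ((A η l j)ᴴ * A η l i)) := by
            simp only [hBtr]
        _ = ((μ i : ℂ) * (μ i : ℂ)) * ((N:ℂ) * Matrix.trace ((A η l i)ᴴ * A η l i)) := by
            rw [Finset.sum_eq_single i]
            · simp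
            · intro j _ hji
              simp [Ne.symm hji]
            · intro hi
              exact absurd (Finset.mem_univ i) hi
    calc ∑ η, ∑ k, ∑ l, Matrix.trace (Λ η k l * (Λ η k l)ᴴ)
        = ∑ η, ∑ l, ∑ k, Matrix.trace (Λ η k l * (Λ η k l)ᴴ) :=
          Finset.sum_congr rfl fun η _ => Finset.sum_comm
      _ = ∑ η, ∑ l, ∑ i, ((μ i : ℂ) * (μ i : ℂ)) * ((N:ℂ) * Matrix.trace ((A η l i)ᴴ * A η l i)) :=
          Finset.sum_congr rfl fun η _ => Finset.sum_congr rfl fun l _ => hstep η l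
      _ = ∑ i, ((μ i : ℂ) * (μ i : ℂ)) * ((N:ℂ) *
            (∑ η, ∑ l, Matrix.trace ((A η l i)ᴴ * A η l i))) := by
          rw [show (∑ η, ∑ l, ∑ i, ((μ i : ℂ) * (μ i : ℂ)) *
                ((N:ℂ) * Matrix.trace ((A η l i)ᴴ * A η l i)))
              = ∑ η, ∑ i, ∑ l, ((μ i : ℂ) * (μ i : ℂ)) *
                ((N:ℂ) * Matrix.trace ((A η l i)ᴴ * A η l i)) from
            Finset.sum_congr rfl fun η _ => Finset.sum_comm]
          rw [Finset.sum_comm]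
          refine Finset.sum_congr rfl fun i _ => ?_
          simp only [← Finset.mul_sum]
      _ = (N:ℂ)^2 := by
          have : ∀ i : Fin P, ∑ η, ∑ l, Matrix.trace ((A η l i)ᴴ * A η l i) = (N:ℂ) := by
            intro i
            rw [hAtr i i, if_pos rfl]
          simp only [this]
          have hc : ∑ i, ((μ i : ℂ) * (μ i : ℂ)) = 1 := by
            have : ∑ i, ((μ i : ℂ) * (μ i : ℂ)) = ((∑ i, μ i ^ 2 : ℝ) : ℂ) := by
              push_cast
              exact Finset.sum_congr rfl fun i _ => by ring
            rw [this, hμsum]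
            norm_num
          rw [← Finset.sum_mul, hc, one_mul]
          ring
  
  -- trace as entry sum, collapse to D
  have hTD : ∀ η k l, Matrix.trace (Λ η k l * (Λ η k l)ᴴ)
      = (N:ℂ)⁻¹ * ∑ q : Fin N × Fin N, (Complex.normSq (D η k l q) : ℂ) := by
    intro η k l
    have htr : Matrix.trace (Λ η k l * (Λ η k l)ᴴ)
        = ∑ p : Fin N × Fin N, ∑ q : Fin N × Fin N,
            Λ η k l p q * (starRingEnd ℂ) (Λ η k l p q) := by
      simp [Matrix.trace, Matrix.diag, Matrix.mul_apply, Matrix.conjTranspose_apply]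
    rw [htr, Fintype.sum_prod_type]
    have key : ∀ (a b : Fin N) (q : Fin N × Fin N),
        Λ η k l (a, b) q * (starRingEnd ℂ) (Λ η k l (a, b) q)
          = if a = b then ((N:ℂ)⁻¹ * (N:ℂ)⁻¹) * (Complex.normSq (D η k l q) : ℂ) else 0 := by
      intro a b q
      rw [hstruct η k l a b q]
      by_cases h : a = b
      · rw [if_pos h, if_pos h, _root_.map_mul, map_inv₀, map_natCast, mul_mul_mul_comm,
          Complex.mul_conj]
      · simp [h]
    have pull : ∀ (c : Prop) (_ : Decidable c) (f : Fin N × Fin N → ℂ),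
        (∑ q : Fin N × Fin N, if c then f q else 0) = if c then ∑ q : Fin N × Fin N, f q else 0 := by
      intro c inst f
      split <;> simp
    calc ∑ a : Fin N, ∑ b : Fin N, ∑ q : Fin N × Fin N,
            Λ η k l (a, b) q * (starRingEnd ℂ) (Λ η k l (a, b) q)
        = ∑ a : Fin N, ∑ b : Fin N,
            if a = b then ((N:ℂ)⁻¹ * (N:ℂ)⁻¹) * ∑ q : Fin N × Fin N,
              (Complex.normSq (D η k l q) : ℂ) else 0 := by
          refine Finset.sum_congr rfl fun a _ => Finset.sum_congr rfl fun b _ => ?_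
          rw [show (∑ q : Fin N × Fin N, Λ η k l (a, b) q * (starRingEnd ℂ) (Λ η k l (a, b) q))
              = ∑ q : Fin N × Fin N, if a = b then
                ((N:ℂ)⁻¹ * (N:ℂ)⁻¹) * (Complex.normSq (D η k l q) : ℂ) else 0 from
            Finset.sum_congr rfl fun q _ => key a b q]
          rw [pull _ _ _, ← Finset.mul_sum]
      _ = ∑ a : Fin N, ((N:ℂ)⁻¹ * (N:ℂ)⁻¹) * ∑ q : Fin N × Fin N,
            (Complex.normSq (D η k l q) : ℂ) := by
          refine Finset.sum_congr rfl fun a _ => ?_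
          simp [Finset.sum_ite_eq]
      _ = (N:ℂ)⁻¹ * ∑ q : Fin N × Fin N, (Complex.normSq (D η k l q) : ℂ) := by
          rw [Finset.sum_const, Finset.card_univ, Fintype.card_fin, nsmul_eq_mul]
          field_simp
  have hDtotC : ∑ η, ∑ k, ∑ l, ∑ q : Fin N × Fin N,
      (Complex.normSq (D η k l q) : ℂ) = (N:ℂ)^3 := by
    have h := htot2
    simp only [hTD] at h
    simp only [← Finset.mul_sum] at h
    have h2 := congrArg (fun z => (N:ℂ) * z) h
    rw [← mul_assoc, mul_inv_cancel₀ hNC, one_mul] at h2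
    rw [h2]
    ring
  have hDtotR : ∑ η, ∑ k, ∑ l, ∑ c, ∑ d, Complex.normSq (D η k l (c, d)) = (N:ℝ)^3 := by
    have h := hDtotC
    have hsplit : ∀ η k l, ∑ q : Fin N × Fin N, (Complex.normSq (D η k l q) : ℂ)
        = ∑ c, ∑ d, (Complex.normSq (D η k l (c, d)) : ℂ) := fun η k l =>
      Fintype.sum_prod_type _
    simp only [hsplit] at h
    exact_mod_cast h
  -- pointwise Cauchy-Schwarz bound
  have hpoint : ∀ η k l (c d : Fin N), Complex.normSq (D η k l (c, d))
      ≤ (∑ i, μ i) * ∑ i, μ i *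
        ((∑ e, Complex.normSq (B η k i e c)) * (∑ e, Complex.normSq (A η l i d e))) := by
    intro η k l c d
    have hDval : D η k l (c, d) = ∑ i, (μ i : ℂ) * (∑ e, B η k i e c * A η l i d e) := by
      simp only [hD]
      simp only [hent]
      rw [Finset.sum_comm]
      exact Finset.sum_congr rfl fun i _ => (Finset.mul_sum _ _ _).symm
    set v : Fin P → ℝ := fun i => ∑ e, ‖B η k i e c‖ * ‖A η l i d e‖
      with hv
    have habs : ‖D η k l (c, d)‖ ≤ ∑ i, μ i * v i := by
      rw [hDval]
      refine (norm_sum_le _ _).trans ?_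
      refine Finset.sum_le_sum fun i _ => ?_
      rw [norm_mul, Complex.norm_of_nonneg (hμ i)]
      refine mul_le_mul_of_nonneg_left ?_ (hμ i)
      refine (norm_sum_le _ _).trans ?_
      exact le_of_eq (Finset.sum_congr rfl fun e _ => norm_mul _ _)
    have h1 : Complex.normSq (D η k l (c, d)) ≤ (∑ i, μ i * v i)^2 := by
      rw [← Complex.sq_norm]
      exact pow_le_pow_left₀ (norm_nonneg _) habs 2
    have h2 := weighted_cs μ hμ v
    have h3 : ∀ i, v i ^ 2 ≤ (∑ e, Complex.normSq (B η k i e c)) *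
        (∑ e, Complex.normSq (A η l i d e)) := by
      intro i
      have h4 := Finset.sum_mul_sq_le_sq_mul_sq Finset.univ
        (fun e => ‖B η k i e c‖) (fun e => ‖A η l i d e‖)
      simpa [Complex.sq_norm] using h4
    calc Complex.normSq (D η k l (c, d)) ≤ (∑ i, μ i * v i)^2 := h1
      _ ≤ (∑ i, μ i) * ∑ i, μ i * (v i)^2 := h2
      _ ≤ (∑ i, μ i) * ∑ i, μ i * ((∑ e, Complex.normSq (B η k i e c)) *
            (∑ e, Complex.normSq (A η l i d e))) := by
          refine mul_le_mul_of_nonneg_left (Finset.sum_le_sum fun i _ => ?_) hs0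
          exact mul_le_mul_of_nonneg_left (h3 i) (hμ i)
  -- unitarity sums
  have hsumB : ∀ η i, ∑ k, ∑ c, ∑ e, Complex.normSq (B η k i e c) = (N:ℝ) := by
    intro η i
    have h := congrArg Matrix.trace (hB2 η i i)
    rw [if_pos rfl, Matrix.trace_one, Matrix.trace_sum] at h
    have h2 : ∀ k : Fin P, Matrix.trace ((B η k i)ᴴ * B η k i)
        = ∑ c, ∑ e, (Complex.normSq (B η k i e c) : ℂ) := by
      intro k
      simp only [Matrix.trace, Matrix.diag, Matrix.mul_apply, Matrix.conjTranspose_apply]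
      exact Finset.sum_congr rfl fun c _ => Finset.sum_congr rfl fun e _ =>
        Complex.normSq_eq_conj_mul_self.symm
    simp only [h2] at h
    rw [Fintype.card_fin] at h
    exact_mod_cast h
  have hsumA : ∀ i, ∑ η, ∑ l, ∑ d, ∑ e, Complex.normSq (A η l i d e) = (N:ℝ) := by
    intro i
    have h := congrArg Matrix.trace (hA2 i i)
    rw [if_pos rfl, Matrix.trace_one] at h
    have h1 : Matrix.trace (∑ η, ∑ l, (A η l i)ᴴ * A η l i)
        = ∑ η, ∑ l, Matrix.trace ((A η l i)ᴴ * A η l i) := by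
      simp [Matrix.trace_sum]
    rw [h1] at h
    have h2 : ∀ η l, Matrix.trace ((A η l i)ᴴ * A η l i)
        = ∑ d, ∑ e, (Complex.normSq (A η l i d e) : ℂ) := by
      intro η l
      simp only [Matrix.trace, Matrix.diag, Matrix.mul_apply, Matrix.conjTranspose_apply]
      rw [Finset.sum_comm]
      exact Finset.sum_congr rfl fun d _ => Finset.sum_congr rfl fun e _ =>
        Complex.normSq_eq_conj_mul_self.symm
    simp only [h2] at h
    rw [Fintype.card_fin] at h
    exact_mod_cast h
  -- put it together
  have hfinal : (N:ℝ)^3 ≤ (∑ i, μ i)^2 * (N:ℝ)^2 := by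
    rw [← hDtotR]
    have step1 : ∑ η, ∑ k, ∑ l, ∑ c, ∑ d, Complex.normSq (D η k l (c, d))
        ≤ ∑ η, ∑ k, ∑ l, ∑ c, ∑ d, ((∑ i, μ i) * ∑ i, μ i *
          ((∑ e, Complex.normSq (B η k i e c)) * (∑ e, Complex.normSq (A η l i d e)))) := by
      refine Finset.sum_le_sum fun η _ => Finset.sum_le_sum fun k _ =>
        Finset.sum_le_sum fun l _ => Finset.sum_le_sum fun c _ =>
        Finset.sum_le_sum fun d _ => hpoint η k l c d
    refine step1.trans (le_of_eq ?_)
    simp only [← Finset.mul_sum]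
    have hη : ∀ η, ∑ k, ∑ l, ∑ c, ∑ d, ∑ i, μ i *
        ((∑ e, Complex.normSq (B η k i e c)) * (∑ e, Complex.normSq (A η l i d e)))
        = ∑ i, μ i * ((N:ℝ) * (∑ l, ∑ d, ∑ e, Complex.normSq (A η l i d e))) := by
      intro η
      rw [sum_comm5]
      refine Finset.sum_congr rfl fun i _ => ?_
      rw [show (∑ k, ∑ l, ∑ c, ∑ d, μ i * ((∑ e, Complex.normSq (B η k i e c)) *
            (∑ e, Complex.normSq (A η l i d e))))
          = μ i * ∑ k, ∑ l, ∑ c, ∑ d, ((∑ e, Complex.normSq (B η k i e c)) *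
            (∑ e, Complex.normSq (A η l i d e))) from by simp only [← Finset.mul_sum]]
      rw [sum_prod_factor (fun k c => ∑ e, Complex.normSq (B η k i e c))
        (fun l d => ∑ e, Complex.normSq (A η l i d e))]
      rw [show (∑ k, ∑ c, ∑ e, Complex.normSq (B η k i e c)) = (N:ℝ) from hsumB η i]
    have hbig : ∑ η, ∑ k, ∑ l, ∑ c, ∑ d, ∑ i, μ i *
        ((∑ e, Complex.normSq (B η k i e c)) * (∑ e, Complex.normSq (A η l i d e)))
        = (∑ i, μ i) * (N:ℝ)^2 := by
      calc ∑ η, ∑ k, ∑ l, ∑ c, ∑ d, ∑ i, μ i *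
            ((∑ e, Complex.normSq (B η k i e c)) * (∑ e, Complex.normSq (A η l i d e)))
          = ∑ η, ∑ i, μ i * ((N:ℝ) * (∑ l, ∑ d, ∑ e, Complex.normSq (A η l i d e))) :=
            Finset.sum_congr rfl fun η _ => hη η
        _ = ∑ i, ∑ η, μ i * ((N:ℝ) * (∑ l, ∑ d, ∑ e, Complex.normSq (A η l i d e))) :=
            Finset.sum_comm
        _ = ∑ i, μ i * ((N:ℝ) * ∑ η, ∑ l, ∑ d, ∑ e, Complex.normSq (A η l i d e)) := by
            refine Finset.sum_congr rfl fun i _ => ?_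
            simp only [← Finset.mul_sum]
        _ = ∑ i, μ i * ((N:ℝ) * (N:ℝ)) := by
            refine Finset.sum_congr rfl fun i _ => ?_
            rw [hsumA i]
        _ = (∑ i, μ i) * (N:ℝ)^2 := by
            rw [← Finset.sum_mul]
            ring
    rw [hbig]
    ring
  have hNs : (N:ℝ) ≤ (∑ i, μ i)^2 := by
    have h2 : (0:ℝ) < (N:ℝ)^2 := by positivity
    refine le_of_mul_le_mul_right ?_ h2
    nlinarith [hfinal]
  calc Real.sqrt N ≤ Real.sqrt ((∑ i, μ i)^2) := Real.sqrt_le_sqrt hNs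
    _ = ∑ i, μ i := Real.sqrt_sq hs0
end

section
/- Under the protocol data below, if the protocol corrects the channel faithfully and deterministically, i.e. Σ_{η∈Fin M} Σ_{k,l∈Fin P} Λ^η_{k,l} R (Λ^η_{k,l})† = Ψ₀ for the given positive-definite Choi state R, then P ≥ N: the Schmidt rank of the pre-shared entangled state is at least the dimension N of the transmitted system. -/
open Matrix Kronecker ComplexOrder

lemma myrank_add_le {m n : Type*} [Fintype m] [Fintype n] [DecidableEq n]
    (A B : Matrix m n ℂ) : (A + B).rank ≤ A.rank + B.rank := by
  rw [Matrix.rank, Matrix.rank, Matrix.rank, Matrix.mulVecLin_add]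
  have hle : LinearMap.range (A.mulVecLin + B.mulVecLin) ≤
      LinearMap.range A.mulVecLin ⊔ LinearMap.range B.mulVecLin := by
    rintro y ⟨x, rfl⟩
    exact Submodule.add_mem_sup (LinearMap.mem_range_self _ x) (LinearMap.mem_range_self _ x)
  exact (Submodule.finrank_mono hle).trans
    (Submodule.finrank_add_le_finrank_add_finrank _ _)

lemma myrank_sum_le {m n ι : Type*} [Fintype m] [Fintype n] [DecidableEq n]
    (s : Finset ι) (f : ι → Matrix m n ℂ) :
    (∑ i ∈ s, f i).rank ≤ ∑ i ∈ s, (f i).rank := by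
  classical
  induction s using Finset.induction_on with
  | empty => simp [Matrix.rank_zero]
  | insert _ _ h ih =>
      rw [Finset.sum_insert h, Finset.sum_insert h]
      exact (myrank_add_le _ _).trans (add_le_add_right ih _)

lemma sum_mulVec' {m n ι : Type*} [Fintype n] (s : Finset ι)
    (f : ι → Matrix m n ℂ) (x : n → ℂ) :
    (∑ i ∈ s, f i) *ᵥ x = ∑ i ∈ s, f i *ᵥ x := by
  classical
  induction s using Finset.induction_on with
  | empty => simp
  | insert _ _ h ih => rw [Finset.sum_insert h, Finset.sum_insert h, Matrix.add_mulVec, ih]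

lemma dotProduct_sum' {n ι : Type*} [Fintype n] (s : Finset ι)
    (v : n → ℂ) (f : ι → n → ℂ) :
    v ⬝ᵥ (∑ i ∈ s, f i) = ∑ i ∈ s, v ⬝ᵥ f i := by
  classical
  induction s using Finset.induction_on with
  | empty => simp
  | insert _ _ h ih => rw [Finset.sum_insert h, Finset.sum_insert h, dotProduct_add, ih]

lemma myrank_vecMulVec_le {m n : Type*} [Fintype m] [Fintype n] [DecidableEq n]
    (u : m → ℂ) (v : n → ℂ) : (Matrix.vecMulVec u v).rank ≤ 1 := by
  rw [Matrix.vecMulVec_eq (Fin 1)]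
  exact (Matrix.rank_mul_le_left _ _).trans
    ((Matrix.rank_le_card_width _).trans (by simp))

/-- If a protocol deterministically and faithfully corrects a maximal-rank channel,
then the Schmidt rank `P` of the pre-shared entangled state is at least `N`. -/
theorem schmidt_rank_lower_bound
    (N M P : ℕ) (hN : 2 ≤ N) (hM : 1 ≤ M) (hP : 1 ≤ P)
    (μ : Fin P → ℝ) (hμ : ∀ i, 0 ≤ μ i) (hμsum : ∑ i, μ i ^ 2 = 1)
    (A B : Fin M → Fin P → Fin P → Matrix (Fin N) (Fin N) ℂ)
    (hA1 : ∀ i j : Fin P, ∑ η : Fin M, ∑ k : Fin P, A η i k * (A η j k)ᴴ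
        = if i = j then (1 : Matrix (Fin N) (Fin N) ℂ) else 0)
    (hA2 : ∀ i j : Fin P, ∑ η : Fin M, ∑ k : Fin P, (A η k i)ᴴ * A η k j
        = if i = j then (1 : Matrix (Fin N) (Fin N) ℂ) else 0)
    (hB1 : ∀ (η : Fin M) (i j : Fin P), ∑ k : Fin P, B η i k * (B η j k)ᴴ
        = if i = j then (1 : Matrix (Fin N) (Fin N) ℂ) else 0)
    (hB2 : ∀ (η : Fin M) (i j : Fin P), ∑ k : Fin P, (B η k i)ᴴ * B η k j
        = if i = j then (1 : Matrix (Fin N) (Fin N) ℂ) else 0)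
    (Λ : Fin M → Fin P → Fin P → Matrix (Fin N × Fin N) (Fin N × Fin N) ℂ)
    (hΛ : ∀ η k l, Λ η k l = ∑ i : Fin P, ((μ i : ℂ)) • (B η k i ⊗ₖ (A η l i)ᵀ))
    (ψ₀ : Fin N × Fin N → ℂ)
    (hψ₀ : ∀ q : Fin N × Fin N, ψ₀ q = if q.1 = q.2 then (1 / (Real.sqrt N : ℂ)) else 0)
    (Ψ₀ : Matrix (Fin N × Fin N) (Fin N × Fin N) ℂ)
    (hΨ₀ : ∀ q q' : Fin N × Fin N, Ψ₀ q q' = ψ₀ q * (starRingEnd ℂ) (ψ₀ q'))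
    (R : Matrix (Fin N × Fin N) (Fin N × Fin N) ℂ)
    (hR : R.PosDef) (hRtr : R.trace = 1)
    (hcorr : ∑ η : Fin M, ∑ k : Fin P, ∑ l : Fin P, Λ η k l * R * (Λ η k l)ᴴ = Ψ₀) :
    N ≤ P := by
  have hNpos : 0 < N := by omega
  have hsq : (0:ℝ) < Real.sqrt N := Real.sqrt_pos.mpr (by exact_mod_cast hNpos)
  have hsqrt : (Real.sqrt N : ℂ) ≠ 0 := by
    exact_mod_cast Complex.ofReal_ne_zero.mpr (ne_of_gt hsq)
  have hss : (Real.sqrt N : ℂ) * (Real.sqrt N : ℂ) = (N : ℂ) := by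
    rw [← Complex.ofReal_mul, Real.mul_self_sqrt (Nat.cast_nonneg N)]
    norm_cast
  -- the norm of ψ₀
  have hψnorm : star ψ₀ ⬝ᵥ ψ₀ = 1 := by
    simp only [dotProduct, Pi.star_apply, hψ₀]
    rw [Fintype.sum_prod_type]
    simp only [apply_ite (star : ℂ → ℂ), star_zero, ite_mul, zero_mul, mul_ite, mul_zero]
    simp only [Finset.sum_ite_eq, Finset.mem_univ, if_true]
    rw [Finset.sum_const, Finset.card_univ, Fintype.card_fin]
    have h1 : (star (1 / (Real.sqrt N : ℂ))) * (1 / (Real.sqrt N : ℂ)) = 1 / (N:ℂ) := by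
      rw [star_div₀, star_one, Complex.star_def, Complex.conj_ofReal]
      rw [div_mul_div_comm, one_mul, hss]
    rw [h1, nsmul_eq_mul]
    field_simp
  -- Step B1: kernel property
  have key : ∀ (η : Fin M) (k l : Fin P) (x : Fin N × Fin N → ℂ),
      star ψ₀ ⬝ᵥ x = 0 → (Λ η k l)ᴴ *ᵥ x = 0 := by
    intro η k l x hx
    have hΨx : Ψ₀ *ᵥ x = 0 := by
      funext q
      have : (Ψ₀ *ᵥ x) q = ψ₀ q * (star ψ₀ ⬝ᵥ x) := by
        simp only [mulVec, dotProduct, hΨ₀, Pi.star_apply, Finset.mul_sum]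
        exact Finset.sum_congr rfl fun q' _ => by
          rw [Complex.star_def]; ring
      rw [this, hx, mul_zero]
      rfl
    have hq : ∀ (η' : Fin M) (k' l' : Fin P),
        star x ⬝ᵥ ((Λ η' k' l' * R * (Λ η' k' l')ᴴ) *ᵥ x)
          = star ((Λ η' k' l')ᴴ *ᵥ x) ⬝ᵥ (R *ᵥ ((Λ η' k' l')ᴴ *ᵥ x)) := by
      intro η' k' l'
      have hmv : (Λ η' k' l' * R * (Λ η' k' l')ᴴ) *ᵥ x
          = Λ η' k' l' *ᵥ (R *ᵥ ((Λ η' k' l')ᴴ *ᵥ x)) := by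
        rw [mulVec_mulVec, mulVec_mulVec]
      rw [hmv, dotProduct_mulVec, star_mulVec, conjTranspose_conjTranspose]
    have hnn : ∀ (η' : Fin M) (k' l' : Fin P),
        0 ≤ star x ⬝ᵥ ((Λ η' k' l' * R * (Λ η' k' l')ᴴ) *ᵥ x) := fun η' k' l' =>
      (hR.posSemidef.mul_mul_conjTranspose_same (Λ η' k' l')).dotProduct_mulVec_nonneg x
    have hsum0 : ∑ η' : Fin M, ∑ k' : Fin P, ∑ l' : Fin P,
        star x ⬝ᵥ ((Λ η' k' l' * R * (Λ η' k' l')ᴴ) *ᵥ x) = 0 := by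
      have h := congrArg (fun T => star x ⬝ᵥ (T *ᵥ x)) hcorr
      rw [hΨx, dotProduct_zero] at h
      simp only [sum_mulVec', dotProduct_sum'] at h
      exact h
    have h0 : star x ⬝ᵥ ((Λ η k l * R * (Λ η k l)ᴴ) *ᵥ x) = 0 := by
      refine le_antisymm ?_ (hnn η k l)
      calc star x ⬝ᵥ ((Λ η k l * R * (Λ η k l)ᴴ) *ᵥ x)
          ≤ ∑ l' : Fin P, star x ⬝ᵥ ((Λ η k l' * R * (Λ η k l')ᴴ) *ᵥ x) :=
            Finset.single_le_sum (fun i _ => hnn η k i) (Finset.mem_univ l)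
        _ ≤ ∑ k' : Fin P, ∑ l' : Fin P, star x ⬝ᵥ ((Λ η k' l' * R * (Λ η k' l')ᴴ) *ᵥ x) :=
            Finset.single_le_sum
              (fun i _ => Finset.sum_nonneg fun j _ => hnn η i j) (Finset.mem_univ k)
        _ ≤ ∑ η' : Fin M, ∑ k' : Fin P, ∑ l' : Fin P,
              star x ⬝ᵥ ((Λ η' k' l' * R * (Λ η' k' l')ᴴ) *ᵥ x) :=
            Finset.single_le_sum
              (fun i _ => Finset.sum_nonneg fun j _ => Finset.sum_nonneg fun j' _ => hnn i j j')
              (Finset.mem_univ η)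
        _ = 0 := hsum0
    by_contra hy
    have hpos := hR.dotProduct_mulVec_pos (x := (Λ η k l)ᴴ *ᵥ x) hy
    rw [hq η k l] at h0
    rw [h0] at hpos
    exact lt_irrefl _ hpos
  -- Step B2: every column of Λ is a multiple of ψ₀
  have hcol : ∀ (η : Fin M) (k l : Fin P) (q q' : Fin N × Fin N),
      Λ η k l q q' = (star ψ₀ ⬝ᵥ fun p => Λ η k l p q') * ψ₀ q := by
    intro η k l q q'
    set col : Fin N × Fin N → ℂ := fun p => Λ η k l p q' with hcoldef
    set c : ℂ := star ψ₀ ⬝ᵥ col with hc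
    set y : (Fin N × Fin N) → ℂ := col - c • ψ₀ with hy
    have h1 : star ψ₀ ⬝ᵥ y = 0 := by
      rw [hy, dotProduct_sub, dotProduct_smul, hψnorm, smul_eq_mul, mul_one, sub_self]
    have h2 := key η k l y h1
    have h3 : star col ⬝ᵥ y = 0 := by
      have h4 := congrFun h2 q'
      simpa [mulVec, dotProduct, conjTranspose_apply] using h4
    have h4 : star y ⬝ᵥ y = 0 := by
      rw [hy, star_sub, sub_dotProduct, star_smul, smul_dotProduct, ← hy, h3, h1,
        smul_zero, sub_zero]
    have h5 : y = 0 := dotProduct_star_self_eq_zero.mp h4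
    have h6 : col = c • ψ₀ := by rwa [hy, sub_eq_zero] at h5
    calc Λ η k l q q' = col q := rfl
      _ = (c • ψ₀) q := by rw [h6]
      _ = c * ψ₀ q := rfl
  -- Step A: some Λ is nonzero
  have hex : ∃ (η : Fin M) (k l : Fin P) (q q' : Fin N × Fin N), Λ η k l q q' ≠ 0 := by
    by_contra h
    push_neg at h
    have hz : ∀ η k l, Λ η k l = 0 := fun η k l => Matrix.ext fun q q' => h η k l q q'
    have h0 : Ψ₀ = 0 := by
      rw [← hcorr]
      simp [hz]
    have z : Fin N := ⟨0, hNpos⟩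
    have hval : ψ₀ (z, z) = 1 / (Real.sqrt N : ℂ) := by rw [hψ₀]; simp
    have he := hΨ₀ (z, z) (z, z)
    rw [h0, hval] at he
    simp only [Matrix.zero_apply] at he
    rw [map_div₀, _root_.map_one, Complex.conj_ofReal] at he
    rw [div_mul_div_comm, one_mul, hss] at he
    have : (N : ℂ) ≠ 0 := by exact_mod_cast Nat.pos_iff_ne_zero.mp hNpos
    exact (one_div_ne_zero this) he.symm
  obtain ⟨η, k, l, q0, q', hne⟩ := hex
  set c : ℂ := star ψ₀ ⬝ᵥ (fun p => Λ η k l p q') with hc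
  have hcne : c ≠ 0 := by
    intro h
    exact hne (by rw [hcol η k l q0 q', ← hc, h, zero_mul])
  -- the N×N matrix extracted at column q'
  set d : ℂ := c * (1 / (Real.sqrt N : ℂ)) with hd
  have hdne : d ≠ 0 := mul_ne_zero hcne (one_div_ne_zero hsqrt)
  set E : Matrix (Fin N) (Fin N) ℂ := Matrix.of (fun a b => Λ η k l (a, b) q') with hE
  have hE1 : E = Matrix.diagonal (fun _ => d) := by
    ext a b
    rw [hE, Matrix.of_apply, hcol η k l (a, b) q', ← hc, hψ₀]
    by_cases hab : a = b
    · simp [hab, Matrix.diagonal_apply_eq, hd]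
    · simp [hab, Matrix.diagonal_apply_ne _ hab]
  have hrankE : E.rank = N := by
    have hdet : E.det ≠ 0 := by
      rw [hE1, Matrix.det_diagonal, Finset.prod_const]
      exact pow_ne_zero _ hdne
    have : IsUnit E := (Matrix.isUnit_iff_isUnit_det E).mpr (isUnit_iff_ne_zero.mpr hdet)
    rw [Matrix.rank_of_isUnit E this, Fintype.card_fin]
  have hE2 : E = ∑ i : Fin P,
      Matrix.vecMulVec (fun a => (μ i : ℂ) * B η k i a q'.1) (fun b => A η l i q'.2 b) := by
    ext a b
    rw [hE, Matrix.of_apply, hΛ η k l]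
    simp only [Matrix.sum_apply, Matrix.smul_apply, Matrix.kroneckerMap_apply,
      Matrix.transpose_apply, Matrix.vecMulVec_apply, smul_eq_mul]
    exact Finset.sum_congr rfl fun i _ => by ring
  have hle : E.rank ≤ P := by
    rw [hE2]
    calc (∑ i : Fin P, Matrix.vecMulVec (fun a => (μ i : ℂ) * B η k i a q'.1)
            (fun b => A η l i q'.2 b)).rank
        ≤ ∑ i : Fin P, (Matrix.vecMulVec (fun a => (μ i : ℂ) * B η k i a q'.1)
            (fun b => A η l i q'.2 b)).rank := myrank_sum_le _ _
      _ ≤ ∑ _i : Fin P, 1 := Finset.sum_le_sum fun i _ => myrank_vecMulVec_le _ _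
      _ = P := by simp
  omega
end

section
/- Classical communication is necessary: under the protocol data below with M = 1 (no classical communication, i.e. a single index η), the protocol cannot correct the channel faithfully and deterministically; that is, the hypothesis Σ_{k,l∈Fin P} Λ_{k,l} R (Λ_{k,l})† = Ψ₀ for a positive-definite Choi state R leads to a contradiction (False). -/
open Matrix Kronecker ComplexOrder

lemma quadSum {n : Type*} [Fintype n] {ι : Type*} (s : Finset ι)
    (f : ι → Matrix n n ℂ) (x : n → ℂ) :
    star x ⬝ᵥ (∑ i ∈ s, f i) *ᵥ x = ∑ i ∈ s, star x ⬝ᵥ (f i) *ᵥ x := by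
  induction s using Finset.cons_induction with
  | empty => simp
  | cons a s ha ih => simp [Finset.sum_cons, add_mulVec, dotProduct_add, ih]

lemma kron_conjT_s3 {N : ℕ} (C D : Matrix (Fin N) (Fin N) ℂ) :
    (C ⊗ₖ D)ᴴ = Cᴴ ⊗ₖ Dᴴ := by
  ext ⟨a, b⟩ ⟨c, d⟩
  simp [conjTranspose_apply, kronecker_apply]

lemma transp_conjT {N : ℕ} (M : Matrix (Fin N) (Fin N) ℂ) : (Mᵀ)ᴴ = (Mᴴ)ᵀ := by
  ext a b
  simp

lemma kron_sum {N : ℕ} {ι : Type*} (s : Finset ι) (C : Matrix (Fin N) (Fin N) ℂ)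
    (D : ι → Matrix (Fin N) (Fin N) ℂ) :
    C ⊗ₖ (∑ i ∈ s, D i) = ∑ i ∈ s, C ⊗ₖ D i := by
  ext ⟨a, b⟩ ⟨c, d⟩
  simp [kronecker_apply, Matrix.sum_apply, Finset.mul_sum]

/-- Classical communication is necessary: a protocol with a single measurement
outcome (`M = 1`, the index `η` suppressed) cannot deterministically and faithfully
correct a noisy channel whose Choi state `R` is positive definite (maximal rank). -/
theorem classical_communication_necessary
    (N P : ℕ) (hN : 2 ≤ N) (hP : 1 ≤ P)
    (μ : Fin P → ℝ) (hμ : ∀ i, 0 ≤ μ i) (hμsum : ∑ i, μ i ^ 2 = 1)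
    (A B : Fin P → Fin P → Matrix (Fin N) (Fin N) ℂ)
    (hA1 : ∀ i j : Fin P, ∑ k : Fin P, A i k * (A j k)ᴴ
        = if i = j then (1 : Matrix (Fin N) (Fin N) ℂ) else 0)
    (hA2 : ∀ i j : Fin P, ∑ k : Fin P, (A k i)ᴴ * A k j
        = if i = j then (1 : Matrix (Fin N) (Fin N) ℂ) else 0)
    (hB1 : ∀ i j : Fin P, ∑ k : Fin P, B i k * (B j k)ᴴ
        = if i = j then (1 : Matrix (Fin N) (Fin N) ℂ) else 0)
    (hB2 : ∀ i j : Fin P, ∑ k : Fin P, (B k i)ᴴ * B k j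
        = if i = j then (1 : Matrix (Fin N) (Fin N) ℂ) else 0)
    (Λ : Fin P → Fin P → Matrix (Fin N × Fin N) (Fin N × Fin N) ℂ)
    (hΛ : ∀ k l, Λ k l = ∑ i : Fin P, ((μ i : ℂ)) • (B k i ⊗ₖ (A l i)ᵀ))
    (ψ₀ : Fin N × Fin N → ℂ)
    (hψ₀ : ∀ q : Fin N × Fin N, ψ₀ q = if q.1 = q.2 then (1 / (Real.sqrt N : ℂ)) else 0)
    (Ψ₀ : Matrix (Fin N × Fin N) (Fin N × Fin N) ℂ)
    (hΨ₀ : ∀ q q' : Fin N × Fin N, Ψ₀ q q' = ψ₀ q * (starRingEnd ℂ) (ψ₀ q'))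
    (R : Matrix (Fin N × Fin N) (Fin N × Fin N) ℂ)
    (hR : R.PosDef) (hRtr : R.trace = 1)
    (hcorr : ∑ k : Fin P, ∑ l : Fin P, Λ k l * R * (Λ k l)ᴴ = Ψ₀) :
    False := by
  classical
  -- Step 1: off-diagonal rows of every Λ k l vanish
  have hzero : ∀ k l (a b : Fin N), a ≠ b → ∀ q, Λ k l (a, b) q = 0 := by
    intro k l a b hab q
    set x : Fin N × Fin N → ℂ := fun p => if p = (a, b) then 1 else 0 with hxdef
    have hq : ∀ (M : Matrix (Fin N × Fin N) (Fin N × Fin N) ℂ),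
        star x ⬝ᵥ M *ᵥ x = M (a, b) (a, b) := by
      intro M
      simp [dotProduct, mulVec, hxdef, Finset.sum_ite_eq', apply_ite, mul_ite, Finset.mul_sum]
    have hΨx : star x ⬝ᵥ Ψ₀ *ᵥ x = 0 := by
      rw [hq, hΨ₀, hψ₀]
      simp [hab]
    have hterm : ∀ k l : Fin P, star x ⬝ᵥ (Λ k l * R * (Λ k l)ᴴ) *ᵥ x
        = star ((Λ k l)ᴴ *ᵥ x) ⬝ᵥ R *ᵥ ((Λ k l)ᴴ *ᵥ x) := by
      intro k l
      rw [star_mulVec, conjTranspose_conjTranspose, mulVec_mulVec, ← dotProduct_mulVec,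
        mulVec_mulVec, Matrix.mul_assoc]
    have hsplit : ∑ k : Fin P, ∑ l : Fin P,
        star ((Λ k l)ᴴ *ᵥ x) ⬝ᵥ R *ᵥ ((Λ k l)ᴴ *ᵥ x) = 0 := by
      simp_rw [← hterm]
      have hrow : ∀ k : Fin P, ∑ l, star x ⬝ᵥ (Λ k l * R * (Λ k l)ᴴ) *ᵥ x
          = star x ⬝ᵥ (∑ l, Λ k l * R * (Λ k l)ᴴ) *ᵥ x := fun k => (quadSum _ _ _).symm
      rw [Finset.sum_congr rfl fun k _ => hrow k, ← quadSum, hcorr, hΨx]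
    have hnn : ∀ k l : Fin P, 0 ≤ star ((Λ k l)ᴴ *ᵥ x) ⬝ᵥ R *ᵥ ((Λ k l)ᴴ *ᵥ x) :=
      fun k l => hR.posSemidef.dotProduct_mulVec_nonneg _
    have hkl : star ((Λ k l)ᴴ *ᵥ x) ⬝ᵥ R *ᵥ ((Λ k l)ᴴ *ᵥ x) = 0 := by
      have h1 := (Finset.sum_eq_zero_iff_of_nonneg
        (fun k _ => Finset.sum_nonneg fun l _ => hnn k l)).mp hsplit k (Finset.mem_univ k)
      exact (Finset.sum_eq_zero_iff_of_nonneg (fun l _ => hnn k l)).mp h1 l (Finset.mem_univ l)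
    have hw : (Λ k l)ᴴ *ᵥ x = 0 := by
      by_contra hne
      exact absurd hkl (ne_of_gt (hR.dotProduct_mulVec_pos hne))
    have := congrFun hw q
    simp only [mulVec, dotProduct, conjTranspose_apply, hxdef, mul_ite, mul_one, mul_zero,
      Finset.sum_ite_eq', Finset.mem_univ, if_true, Pi.zero_apply] at this
    exact star_eq_zero.mp this
  -- Step 2: matrix identity  ∑ l Λ Λᴴ = ∑ i μ i ^ 2 • (B k i B k iᴴ ⊗ 1)
  have hΛΛ : ∀ k l : Fin P, Λ k l * (Λ k l)ᴴ
      = ∑ i : Fin P, ∑ j : Fin P, ((μ i : ℂ) * (μ j : ℂ)) •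
          ((B k i * (B k j)ᴴ) ⊗ₖ ((A l j)ᴴ * A l i)ᵀ) := by
    intro k l
    rw [hΛ, conjTranspose_sum, Finset.sum_mul_sum]
    refine Finset.sum_congr rfl fun i _ => Finset.sum_congr rfl fun j _ => ?_
    rw [conjTranspose_smul, smul_mul_smul_comm, kron_conjT_s3, ← mul_kronecker_mul,
      transp_conjT, ← transpose_mul, Complex.star_def, Complex.conj_ofReal]
  have hM : ∀ k : Fin P, ∑ l : Fin P, Λ k l * (Λ k l)ᴴ
      = ∑ i : Fin P, ((μ i : ℂ) * (μ i : ℂ)) •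
          ((B k i * (B k i)ᴴ) ⊗ₖ (1 : Matrix (Fin N) (Fin N) ℂ)) := by
    intro k
    simp_rw [hΛΛ k]
    rw [Finset.sum_comm]
    refine Finset.sum_congr rfl fun i _ => ?_
    rw [Finset.sum_comm]
    have hpull : ∀ j : Fin P, ∑ l : Fin P, ((μ i : ℂ) * (μ j : ℂ)) •
          ((B k i * (B k j)ᴴ) ⊗ₖ ((A l j)ᴴ * A l i)ᵀ)
        = ((μ i : ℂ) * (μ j : ℂ)) •
          ((B k i * (B k j)ᴴ) ⊗ₖ (∑ l : Fin P, (A l j)ᴴ * A l i)ᵀ) := by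
      intro j
      rw [transpose_sum, kron_sum, Finset.smul_sum]
    rw [Finset.sum_congr rfl fun j _ => hpull j]
    simp only [hA2]
    rw [Finset.sum_eq_single i
        (fun j _ hji => by rw [if_neg hji, transpose_zero, kronecker_zero, smul_zero])
        (fun h => absurd (Finset.mem_univ i) h),
      if_pos rfl, transpose_one]
  -- Step 3: entrywise consequence at ((a,b),(a,b)) with a ≠ b
  have hEntry : ∀ (k : Fin P) (a b : Fin N), a ≠ b →
      ∑ i : Fin P, ((μ i : ℂ) * (μ i : ℂ)) * ((B k i * (B k i)ᴴ) a a) = 0 := by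
    intro k a b hab
    have h1 := congrFun (congrFun (hM k) (a, b)) (a, b)
    have hLHS : (∑ l : Fin P, Λ k l * (Λ k l)ᴴ) (a, b) (a, b) = 0 := by
      simp [Matrix.sum_apply, mul_apply, conjTranspose_apply, hzero _ _ _ _ hab]
    rw [hLHS] at h1
    have hRHS : (∑ i : Fin P, ((μ i : ℂ) * (μ i : ℂ)) •
          ((B k i * (B k i)ᴴ) ⊗ₖ (1 : Matrix (Fin N) (Fin N) ℂ))) (a, b) (a, b)
        = ∑ i : Fin P, ((μ i : ℂ) * (μ i : ℂ)) * ((B k i * (B k i)ᴴ) a a) := by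
      simp [Matrix.sum_apply, Matrix.smul_apply, kronecker_apply, one_apply_eq,
        smul_eq_mul]
    rw [hRHS] at h1
    exact h1.symm
  -- Step 4: summing over k, a gives N = 0
  have hBtr : ∀ i : Fin P, ∑ k : Fin P, ∑ a : Fin N, (B k i * (B k i)ᴴ) a a = (N : ℂ) := by
    intro i
    have h2 : ∑ k : Fin P, (B k i * (B k i)ᴴ).trace = (N : ℂ) := by
      have h3 : ∀ k : Fin P, (B k i * (B k i)ᴴ).trace = ((B k i)ᴴ * B k i).trace :=
        fun k => trace_mul_comm _ _
      rw [Finset.sum_congr rfl fun k _ => h3 k, ← trace_sum, hB2, if_pos rfl, trace_one]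
      simp
    simpa [Matrix.trace, Matrix.diag] using h2
  -- choose for each a some b ≠ a
  have hN0 : (0 : ℕ) < N := by omega
  have hN1 : (1 : ℕ) < N := by omega
  set f : Fin N → Fin N := fun a => if a = ⟨0, hN0⟩ then ⟨1, hN1⟩ else ⟨0, hN0⟩ with hfdef
  have hf : ∀ a : Fin N, a ≠ f a := by
    intro a
    simp only [hfdef]
    split
    · next h => subst h; simp [Fin.ext_iff]
    · next h => exact h
  have htot : ∑ k : Fin P, ∑ a : Fin N,
      ∑ i : Fin P, ((μ i : ℂ) * (μ i : ℂ)) * ((B k i * (B k i)ᴴ) a a) = 0 :=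
    Finset.sum_eq_zero fun k _ => Finset.sum_eq_zero fun a _ => hEntry k a (f a) (hf a)
  have htot2 : ∑ k : Fin P, ∑ a : Fin N,
      ∑ i : Fin P, ((μ i : ℂ) * (μ i : ℂ)) * ((B k i * (B k i)ᴴ) a a) = (N : ℂ) := by
    have e1 : ∀ k : Fin P, ∑ a : Fin N,
        ∑ i : Fin P, ((μ i : ℂ) * (μ i : ℂ)) * ((B k i * (B k i)ᴴ) a a)
        = ∑ i : Fin P, ((μ i : ℂ) * (μ i : ℂ)) * ∑ a : Fin N, (B k i * (B k i)ᴴ) a a := by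
      intro k
      rw [Finset.sum_comm]
      exact Finset.sum_congr rfl fun i _ => (Finset.mul_sum _ _ _).symm
    rw [Finset.sum_congr rfl fun k _ => e1 k, Finset.sum_comm]
    have e2 : ∀ i : Fin P, ∑ k : Fin P,
        ((μ i : ℂ) * (μ i : ℂ)) * ∑ a : Fin N, (B k i * (B k i)ᴴ) a a
        = ((μ i : ℂ) * (μ i : ℂ)) * (N : ℂ) := by
      intro i
      rw [← Finset.mul_sum, hBtr i]
    rw [Finset.sum_congr rfl fun i _ => e2 i, ← Finset.sum_mul]
    have hμC : (∑ i : Fin P, ((μ i : ℂ) * (μ i : ℂ))) = 1 := by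
      have h4 : ((∑ i, μ i ^ 2 : ℝ) : ℂ) = 1 := by rw [hμsum]; norm_num
      rw [← h4, Complex.ofReal_sum]
      exact Finset.sum_congr rfl fun i _ => by push_cast; ring
    rw [hμC, one_mul]
  rw [htot] at htot2
  have : (N : ℂ) ≠ 0 := by
    simp only [ne_eq, Nat.cast_eq_zero]
    omega
  exact this htot2.symm
end

section
/- Let N ≥ 2 and P ≥ 1, let μ : Fin P → ℝ satisfy μ_i ≥ 0 and Σ_{i∈Fin P} μ_i² = 1, and let A_{l,i} and B_{k,i} (k, l, i ∈ Fin P) be N×N complex matrices satisfying the completeness relations Σ_{k∈Fin P} A_{i,k}(A_{j,k})† = Σ_{k∈Fin P} (A_{k,i})† A_{k,j} = δ_{ij}·1_N and Σ_{k∈Fin P} B_{i,k}(B_{j,k})† = Σ_{k∈Fin P} (B_{k,i})† B_{k,j} = δ_{ij}·1_N for all i,j ∈ Fin P. Suppose there exists an injection e : Fin N → Fin P such that for all m, n ∈ Fin N and all k, l ∈ Fin P, the matrix element identity Σ_{i∈Fin P} μ_i · (A_{l,i} · B_{k,i})_{n,m} = √N · [k = e(m)] · [l = e(n)] holds. Then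 False: multiplying this identity by its complex conjugate, summing over n, k, l and using the completeness relations yields Σ_i μ_i² = N², contradicting Σ_i μ_i² = 1. -/
open Matrix

lemma sum_swap_nkl_ij {α β : Type*} [Fintype α] [Fintype β] (f : α → β → β → β → β → ℂ) :
    ∑ n : α, ∑ k : β, ∑ l : β, ∑ i : β, ∑ j : β, f n k l i j
      = ∑ i : β, ∑ j : β, ∑ k : β, ∑ l : β, ∑ n : α, f n k l i j := by
  have h1 : ∀ n : α, ∑ k : β, ∑ l : β, ∑ i : β, ∑ j : β, f n k l i j
      = ∑ i : β, ∑ j : β, ∑ k : β, ∑ l : β, f n k l i j := by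
    intro n
    have hk : ∀ k : β, ∑ l : β, ∑ i : β, ∑ j : β, f n k l i j
        = ∑ i : β, ∑ j : β, ∑ l : β, f n k l i j := by
      intro k
      rw [Finset.sum_comm]
      exact Finset.sum_congr rfl fun i _ => Finset.sum_comm
    simp only [hk]
    rw [Finset.sum_comm]
    exact Finset.sum_congr rfl fun i _ => Finset.sum_comm
  simp only [h1]
  rw [Finset.sum_comm]
  refine Finset.sum_congr rfl fun i _ => ?_
  rw [Finset.sum_comm]
  refine Finset.sum_congr rfl fun j _ => ?_
  rw [Finset.sum_comm]
  exact Finset.sum_congr rfl fun k _ => Finset.sum_comm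

/-- Eq. (13) of the paper: the matrix-element identity
`∑ i, μ i * (A l i * B k i) n m = √N · [k = e m] · [l = e n]`, together with the
completeness relations for the local operators and the normalization `∑ i, μ i ^ 2 = 1`,
is contradictory (multiplying by the conjugate and summing over `n, k, l` gives
`∑ i, μ i ^ 2 = N ^ 2`). -/
theorem no_cc_matrix_element_contradiction
    (N P : ℕ) (hN : 2 ≤ N) (hP : 1 ≤ P)
    (μ : Fin P → ℝ) (hμ : ∀ i, 0 ≤ μ i) (hμsum : ∑ i, μ i ^ 2 = 1)
    (A B : Fin P → Fin P → Matrix (Fin N) (Fin N) ℂ)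
    (hA1 : ∀ i j : Fin P, ∑ k : Fin P, A i k * (A j k)ᴴ
        = if i = j then (1 : Matrix (Fin N) (Fin N) ℂ) else 0)
    (hA2 : ∀ i j : Fin P, ∑ k : Fin P, (A k i)ᴴ * A k j
        = if i = j then (1 : Matrix (Fin N) (Fin N) ℂ) else 0)
    (hB1 : ∀ i j : Fin P, ∑ k : Fin P, B i k * (B j k)ᴴ
        = if i = j then (1 : Matrix (Fin N) (Fin N) ℂ) else 0)
    (hB2 : ∀ i j : Fin P, ∑ k : Fin P, (B k i)ᴴ * B k j
        = if i = j then (1 : Matrix (Fin N) (Fin N) ℂ) else 0)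
    (e : Fin N → Fin P) (he : Function.Injective e)
    (hid : ∀ (m n : Fin N) (k l : Fin P),
      ∑ i : Fin P, ((μ i : ℂ)) * ((A l i * B k i) n m)
        = (Real.sqrt N : ℂ) * (if k = e m then 1 else 0) * (if l = e n then 1 else 0)) :
    False := by
  have hN0 : 0 < N := by omega
  set m : Fin N := ⟨0, hN0⟩ with hm
  set S : ℂ := ∑ n : Fin N, ∑ k : Fin P, ∑ l : Fin P,
      (starRingEnd ℂ) (∑ i : Fin P, (μ i : ℂ) * ((A l i * B k i) n m)) *
      (∑ i : Fin P, (μ i : ℂ) * ((A l i * B k i) n m)) with hS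
  -- matrix-level inner identity
  have hInner : ∀ i j : Fin P,
      ∑ k : Fin P, ∑ l : Fin P, ((A l i * B k i)ᴴ * (A l j * B k j))
        = if i = j then (1 : Matrix (Fin N) (Fin N) ℂ) else 0 := by
    intro i j
    have step : ∀ k : Fin P,
        ∑ l : Fin P, ((A l i * B k i)ᴴ * (A l j * B k j))
          = (B k i)ᴴ * ((if i = j then (1 : Matrix (Fin N) (Fin N) ℂ) else 0) * B k j) := by
      intro k
      rw [← hA2 i j, Finset.sum_mul, Finset.mul_sum]
      refine Finset.sum_congr rfl fun l _ => ?_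
      rw [conjTranspose_mul]
      simp only [mul_assoc]
    simp only [step]
    by_cases hij : i = j
    · subst hij
      simp only [if_pos rfl, one_mul]
      simpa using hB2 i i
    · simp [hij]
  -- S computed via the completeness relations equals 1
  have key1 : S = 1 := by
    have expand : S = ∑ i : Fin P, ∑ j : Fin P, ((μ i : ℂ) * (μ j : ℂ)) *
        ((∑ k : Fin P, ∑ l : Fin P, ((A l i * B k i)ᴴ * (A l j * B k j))) m m) := by
      rw [hS]
      have h1 : ∀ (n : Fin N) (k l : Fin P),
          (starRingEnd ℂ) (∑ i : Fin P, (μ i : ℂ) * ((A l i * B k i) n m)) *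
          (∑ i : Fin P, (μ i : ℂ) * ((A l i * B k i) n m))
          = ∑ i : Fin P, ∑ j : Fin P, ((μ i : ℂ) * (μ j : ℂ)) *
              ((starRingEnd ℂ) ((A l i * B k i) n m) * ((A l j * B k j) n m)) := by
        intro n k l
        rw [map_sum, Finset.sum_mul_sum]
        refine Finset.sum_congr rfl fun i _ => Finset.sum_congr rfl fun j _ => ?_
        rw [RingHom.map_mul, Complex.conj_ofReal]
        ring
      simp only [h1]
      rw [sum_swap_nkl_ij (fun n k l i j => ((μ i : ℂ) * (μ j : ℂ)) *
              ((starRingEnd ℂ) ((A l i * B k i) n m) * ((A l j * B k j) n m)))]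
      refine Finset.sum_congr rfl fun i _ => Finset.sum_congr rfl fun j _ => ?_
      simp only [Matrix.sum_apply, Finset.mul_sum]
      refine Finset.sum_congr rfl fun k _ => Finset.sum_congr rfl fun l _ => ?_
      rw [Matrix.mul_apply]
      simp only [conjTranspose_apply, Finset.mul_sum, starRingEnd_apply]
    rw [expand]
    have h2 : ∀ i j : Fin P, ((μ i : ℂ) * (μ j : ℂ)) *
        ((∑ k : Fin P, ∑ l : Fin P, ((A l i * B k i)ᴴ * (A l j * B k j))) m m)
        = if i = j then (μ i : ℂ) * (μ j : ℂ) else 0 := by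
      intro i j
      rw [hInner i j]
      by_cases hij : i = j
      · simp [hij, Matrix.one_apply_eq]
      · simp [hij]
    simp only [h2, Finset.sum_ite_eq, Finset.mem_univ, if_true]
    have h3 : ∑ i : Fin P, (μ i : ℂ) * (μ i : ℂ) = ((∑ i, μ i ^ 2 : ℝ) : ℂ) := by
      push_cast
      exact Finset.sum_congr rfl fun i _ => by ring
    rw [h3, hμsum, Complex.ofReal_one]
  -- S computed via the identity equals N * N
  have key2 : S = (N : ℂ) * N := by
    rw [hS]
    simp only [hid]
    have hsq : (Real.sqrt N : ℂ) * (Real.sqrt N : ℂ) = (N : ℂ) := by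
      rw [← Complex.ofReal_mul, Real.mul_self_sqrt (by positivity)]
      norm_num
    have hterm : ∀ (n : Fin N) (k l : Fin P),
        (starRingEnd ℂ) ((Real.sqrt N : ℂ) * (if k = e m then 1 else 0) *
            (if l = e n then 1 else 0)) *
        ((Real.sqrt N : ℂ) * (if k = e m then 1 else 0) * (if l = e n then 1 else 0))
        = (N : ℂ) * (if k = e m then 1 else 0) * (if l = e n then 1 else 0) := by
      intro n k l
      by_cases h1 : k = e m <;> by_cases h2 : l = e n <;>
        simp [h1, h2, Complex.conj_ofReal, hsq]
    simp only [hterm]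
    have hsum : ∀ n : Fin N, ∑ k : Fin P, ∑ l : Fin P,
        (N : ℂ) * (if k = e m then 1 else 0) * (if l = e n then 1 else 0) = (N : ℂ) := by
      intro n
      simp [Finset.sum_ite_eq', mul_ite]
    simp [hsum]
  rw [key1] at key2
  have : (1 : ℂ) = ((N * N : ℕ) : ℂ) := by push_cast; exact key2
  have hnat : (1 : ℕ) = N * N := by exact_mod_cast this
  nlinarith
end

section
/- Let d ≥ 1 and let Φ be a linear map from d×d complex matrices to d×d complex matrices that maps positive semidefinite matrices to positive semidefinite matrices and preserves the trace. Let R be a positive definite d×d matrix with trace 1, and let v ∈ ℂ^d be a unit vector such that Φ(R) = vv†. Then Φ(ww†) = vv† for every unit vector w ∈ ℂ^d. -/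
open Matrix ComplexOrder

private lemma vmv_mulVec {d : ℕ} (u z x : Fin d → ℂ) :
    vecMulVec u z *ᵥ x = (z ⬝ᵥ x) • u := by
  ext i
  simp only [mulVec, dotProduct, vecMulVec_apply, Pi.smul_apply, smul_eq_mul, Finset.sum_mul]
  exact Finset.sum_congr rfl fun j _ => by ring

private lemma dot_star_comm {d : ℕ} (a b : Fin d → ℂ) : star a ⬝ᵥ b = star (star b ⬝ᵥ a) := by
  simp [dotProduct, Finset.sum_comm, mul_comm]

private lemma outer_isHermitian {d : ℕ} (u : Fin d → ℂ) :
    (vecMulVec u (star u)).IsHermitian := by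
  ext i j
  simp [conjTranspose_apply, vecMulVec_apply, mul_comm]

private lemma outer_posSemidef {d : ℕ} (u : Fin d → ℂ) :
    (vecMulVec u (star u)).PosSemidef := by
  refine Matrix.PosSemidef.of_dotProduct_mulVec_nonneg (outer_isHermitian u) fun x => ?_
  rw [vmv_mulVec, dotProduct_smul, smul_eq_mul, dot_star_comm x u]
  exact mul_star_self_nonneg (star u ⬝ᵥ x)

private lemma outer_trace {d : ℕ} (u : Fin d → ℂ) (hu : ∑ i, Complex.normSq (u i) = 1) :
    (vecMulVec u (star u)).trace = 1 := by
  simp only [Matrix.trace, Matrix.diag, vecMulVec_apply, Pi.star_apply, Complex.star_def,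
    Complex.mul_conj]
  exact_mod_cast hu

private lemma smul_psd {d : ℕ} {A : Matrix (Fin d) (Fin d) ℂ} (hA : A.PosSemidef)
    {ε : ℝ} (hε : 0 ≤ ε) : ((ε : ℂ) • A).PosSemidef := by
  refine Matrix.PosSemidef.of_dotProduct_mulVec_nonneg ?_ fun x => ?_
  · show ((ε : ℂ) • A)ᴴ = _
    rw [conjTranspose_smul, hA.1.eq]
    simp [Complex.star_def, Complex.conj_ofReal]
  · rw [smul_mulVec, dotProduct_smul, smul_eq_mul]
    exact mul_nonneg (by exact_mod_cast hε) (hA.dotProduct_mulVec_nonneg x)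

private lemma cs_aux {d : ℕ} (w x : Fin d → ℂ) (hw : ∑ i, Complex.normSq (w i) = 1) :
    Complex.normSq (star w ⬝ᵥ x) ≤ ∑ i, Complex.normSq (x i) := by
  have h := norm_inner_le_norm (𝕜 := ℂ)
    ((WithLp.equiv 2 _).symm w : EuclideanSpace ℂ (Fin d)) ((WithLp.equiv 2 _).symm x)
  have e : inner ℂ ((WithLp.equiv 2 _).symm w : EuclideanSpace ℂ (Fin d)) ((WithLp.equiv 2 _).symm x)
      = star w ⬝ᵥ x := by rw [dotProduct_comm]; rfl
  rw [e] at h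
  have hn : ∀ (y : Fin d → ℂ),
      ‖((WithLp.equiv 2 _).symm y : EuclideanSpace ℂ (Fin d))‖ ^ 2 = ∑ i, Complex.normSq (y i) := by
    intro y
    rw [EuclideanSpace.norm_eq, Real.sq_sqrt (by positivity)]
    simp [Complex.sq_norm]
  have h2 : ‖star w ⬝ᵥ x‖ ^ 2 ≤ (∑ i, Complex.normSq (w i)) * (∑ i, Complex.normSq (x i)) := by
    rw [← hn w, ← hn x, ← mul_pow]
    exact pow_le_pow_left₀ (norm_nonneg _) h 2
  rw [hw, one_mul] at h2
  calc Complex.normSq (star w ⬝ᵥ x) = ‖star w ⬝ᵥ x‖ ^ 2 := by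
        rw [Complex.sq_norm]
    _ ≤ _ := h2

private lemma star_dot_self_eq {d : ℕ} (x : Fin d → ℂ) :
    star x ⬝ᵥ x = ((∑ i, Complex.normSq (x i) : ℝ) : ℂ) := by
  push_cast
  simp only [dotProduct, Pi.star_apply, Complex.star_def]
  exact Finset.sum_congr rfl fun i _ => by rw [mul_comm, Complex.mul_conj]

private lemma one_sub_outer_psd {d : ℕ} (w : Fin d → ℂ)
    (hw : ∑ i, Complex.normSq (w i) = 1) :
    ((1 : Matrix (Fin d) (Fin d) ℂ) - vecMulVec w (star w)).PosSemidef := by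
  refine Matrix.PosSemidef.of_dotProduct_mulVec_nonneg ((Matrix.isHermitian_one).sub (outer_isHermitian w)) fun x => ?_
  rw [sub_mulVec, dotProduct_sub, one_mulVec, vmv_mulVec, dotProduct_smul, smul_eq_mul,
    dot_star_comm x w, star_dot_self_eq]
  have h2 : (star w ⬝ᵥ x) * star (star w ⬝ᵥ x) = ((Complex.normSq (star w ⬝ᵥ x) : ℝ) : ℂ) := by
    rw [Complex.star_def, Complex.mul_conj]
  rw [h2, ← Complex.ofReal_sub, Complex.zero_le_real]
  exact sub_nonneg.mpr (cs_aux w x hw)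

private lemma exists_eps {d : ℕ} (hd : 1 ≤ d) (R : Matrix (Fin d) (Fin d) ℂ) (hR : R.PosDef) :
    ∃ ε : ℝ, 0 < ε ∧ (R - (ε : ℂ) • 1).PosSemidef := by
  haveI : Nonempty (Fin d) := ⟨⟨0, hd⟩⟩
  set hH := hR.1 with hHdef
  set ε : ℝ := Finset.univ.inf' Finset.univ_nonempty hH.eigenvalues with hε
  have hεpos : 0 < ε := by
    rw [hε, Finset.lt_inf'_iff]
    exact fun i _ => hR.eigenvalues_pos i
  refine ⟨ε, hεpos, ?_⟩
  have hU : (hH.eigenvectorUnitary : Matrix (Fin d) (Fin d) ℂ) *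
      star (hH.eigenvectorUnitary : Matrix (Fin d) (Fin d) ℂ) = 1 :=
    (Matrix.mem_unitaryGroup_iff).mp hH.eigenvectorUnitary.2
  have key : R - (ε : ℂ) • 1 = (hH.eigenvectorUnitary : Matrix (Fin d) (Fin d) ℂ) *
      diagonal (fun i => ((hH.eigenvalues i - ε : ℝ) : ℂ)) *
      (hH.eigenvectorUnitary : Matrix (Fin d) (Fin d) ℂ)ᴴ := by
    have hd2 : diagonal (fun i => ((hH.eigenvalues i - ε : ℝ) : ℂ)) =
        diagonal (RCLike.ofReal ∘ hH.eigenvalues) - (ε : ℂ) • 1 := by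
      ext i j
      by_cases h : i = j
      · subst h
        simp [Matrix.one_apply, Complex.ofReal_sub]
      · simp [Matrix.diagonal_apply_ne _ h, Matrix.one_apply, h]
    rw [hd2, Matrix.mul_sub, Matrix.sub_mul, ← Matrix.star_eq_conjTranspose]
    rw [Matrix.mul_smul, Matrix.smul_mul, Matrix.mul_one, hU]
    have hs := hH.spectral_theorem
    simp only [Unitary.conjStarAlgAut_apply, Unitary.coe_star] at hs
    rw [← hs]
  rw [key]
  refine (Matrix.PosSemidef.diagonal ?_).mul_mul_conjTranspose_same _
  intro i
  have := Finset.inf'_le hH.eigenvalues (Finset.mem_univ i)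
  rw [← hε] at this
  simp only [Pi.zero_apply]
  exact_mod_cast sub_nonneg.mpr this

/-- A positive trace-preserving linear map `Φ` sending a full-rank state `R`
(positive definite, unit trace) to a pure state `vv†` must send every pure state
`ww†` to `vv†`. -/
theorem positive_map_fullrank_to_pure
    (d : ℕ) (hd : 1 ≤ d)
    (Φ : Matrix (Fin d) (Fin d) ℂ →ₗ[ℂ] Matrix (Fin d) (Fin d) ℂ)
    (hpos : ∀ X : Matrix (Fin d) (Fin d) ℂ, X.PosSemidef → (Φ X).PosSemidef)
    (htr : ∀ X : Matrix (Fin d) (Fin d) ℂ, (Φ X).trace = X.trace)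
    (R : Matrix (Fin d) (Fin d) ℂ) (hR : R.PosDef) (hRtr : R.trace = 1)
    (v : Fin d → ℂ) (hv : ∑ i, Complex.normSq (v i) = 1)
    (hΦR : Φ R = Matrix.vecMulVec v (star v)) :
    ∀ w : Fin d → ℂ, (∑ i, Complex.normSq (w i) = 1) →
      Φ (Matrix.vecMulVec w (star w)) = Matrix.vecMulVec v (star v) := by
  intro w hw
  obtain ⟨ε, hεpos, hRe⟩ := exists_eps hd R hR
  set W := vecMulVec w (star w) with hWdef
  set V := vecMulVec v (star v) with hVdef
  have hWpsd : W.PosSemidef := outer_posSemidef w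
  have hRW : (R - (ε : ℂ) • W).PosSemidef := by
    have e : R - (ε : ℂ) • W
        = (R - (ε : ℂ) • 1) + (ε : ℂ) • ((1 : Matrix (Fin d) (Fin d) ℂ) - W) := by
      rw [smul_sub]; abel
    rw [e]
    exact hRe.add (smul_psd (one_sub_outer_psd w hw) hεpos.le)
  have hS := hpos _ hRW
  have hA := hpos _ hWpsd
  set A := Φ W with hAdef
  have hsum : V = Φ (R - (ε : ℂ) • W) + (ε : ℂ) • A := by
    rw [map_sub, _root_.map_smul, hΦR, ← hAdef, sub_add_cancel]
  have hεne : ((ε : ℂ)) ≠ 0 := by exact_mod_cast hεpos.ne'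
  have hv1 : star v ⬝ᵥ v = 1 := by
    rw [star_dot_self_eq, hv, Complex.ofReal_one]
  -- A kills everything orthogonal to v
  have hker : ∀ x : Fin d → ℂ, star v ⬝ᵥ x = 0 → A *ᵥ x = 0 := by
    intro x hx
    have hVx : V *ᵥ x = 0 := by rw [hVdef, vmv_mulVec, hx, zero_smul]
    have h0 : star x ⬝ᵥ (Φ (R - (ε : ℂ) • W)) *ᵥ x + (ε : ℂ) * (star x ⬝ᵥ A *ᵥ x) = 0 := by
      have h := congrArg (fun M : Matrix (Fin d) (Fin d) ℂ => star x ⬝ᵥ M *ᵥ x) hsum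
      simp only [hVx, dotProduct_zero, add_mulVec, smul_mulVec, dotProduct_add,
        dotProduct_smul, smul_eq_mul] at h
      exact h.symm
    have hb : (ε : ℂ) * (star x ⬝ᵥ A *ᵥ x) = 0 := by
      have h1 := hS.dotProduct_mulVec_nonneg x
      have h2 : 0 ≤ (ε : ℂ) * (star x ⬝ᵥ A *ᵥ x) :=
        mul_nonneg (by exact_mod_cast hεpos.le) (hA.dotProduct_mulVec_nonneg x)
      have h3 : (ε : ℂ) * (star x ⬝ᵥ A *ᵥ x)
          = -(star x ⬝ᵥ (Φ (R - (ε : ℂ) • W)) *ᵥ x) :=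
        eq_neg_of_add_eq_zero_right h0
      exact le_antisymm (h3 ▸ neg_nonpos_of_nonneg h1) h2
    have hq := (mul_eq_zero.mp hb).resolve_left hεne
    exact (hA.dotProduct_mulVec_zero_iff x).mp hq
  set c := star v ⬝ᵥ (A *ᵥ v) with hc
  have hAv : A *ᵥ v = c • v := by
    set r := A *ᵥ v - c • v with hr
    have hrv : star v ⬝ᵥ r = 0 := by
      rw [hr, dotProduct_sub, dotProduct_smul, hv1, smul_eq_mul, mul_one, hc, sub_self]
    have hAr : A *ᵥ r = 0 := hker r hrv
    have hrA : star r ᵥ* A = 0 := by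
      have h := congrArg star hAr
      rwa [star_mulVec, hA.1.eq, star_zero] at h
    have h1 : star r ⬝ᵥ (A *ᵥ v) = 0 := by
      rw [dotProduct_mulVec, hrA, zero_dotProduct]
    have h2 : star r ⬝ᵥ v = 0 := by
      rw [dot_star_comm r v, hrv, star_zero]
    have hrr : star r ⬝ᵥ r = 0 := by
      have h3 : star r ⬝ᵥ (A *ᵥ v - c • v) = 0 := by
        rw [dotProduct_sub, h1, dotProduct_smul, h2, smul_eq_mul, mul_zero, sub_zero]
      rwa [← hr] at h3
    have hr0 : A *ᵥ v - c • v = 0 := by rw [← hr]; exact dotProduct_star_self_eq_zero.mp hrr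
    exact sub_eq_zero.mp hr0
  have hAy : ∀ y : Fin d → ℂ, A *ᵥ y = (c * (star v ⬝ᵥ y)) • v := by
    intro y
    have hperp : star v ⬝ᵥ (y - (star v ⬝ᵥ y) • v) = 0 := by
      rw [dotProduct_sub, dotProduct_smul, hv1, smul_eq_mul, mul_one, sub_self]
    have hdec : (star v ⬝ᵥ y) • v + (y - (star v ⬝ᵥ y) • v) = y := by abel
    calc A *ᵥ y = A *ᵥ ((star v ⬝ᵥ y) • v + (y - (star v ⬝ᵥ y) • v)) := by rw [hdec]
      _ = (star v ⬝ᵥ y) • (A *ᵥ v) + A *ᵥ (y - (star v ⬝ᵥ y) • v) := by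
            rw [mulVec_add, mulVec_smul]
      _ = (star v ⬝ᵥ y) • (c • v) + 0 := by rw [hAv, hker _ hperp]
      _ = (c * (star v ⬝ᵥ y)) • v := by rw [add_zero, smul_smul, mul_comm]
  have hAV : A = c • V := by
    ext i j
    have h := congrFun (hAy (Pi.single j 1)) i
    rw [mulVec_single] at h
    simp only [dotProduct_single, mul_one, Pi.smul_apply, smul_eq_mul, Pi.star_apply,
      MulOpposite.op_one, one_smul, Matrix.col_apply] at h
    simp only [hVdef, Matrix.smul_apply, vecMulVec_apply, Pi.star_apply, smul_eq_mul]
    rw [h]; ring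
  have htrV : V.trace = 1 := outer_trace v hv
  have htrA : A.trace = 1 := by
    rw [hAdef, htr]
    exact outer_trace w hw
  have hc1 : c = 1 := by
    have h := congrArg Matrix.trace hAV
    rw [htrA, trace_smul, htrV, smul_eq_mul, mul_one] at h
    exact h.symm
  show A = V
  rw [hAV, hc1, one_smul]
end

section
/- Universality of quantum teleportation (Eq. (5) of the paper): fix N ≥ 2, let ρ be any N×N complex matrix, and let (E_t)_{t∈Fin K} be N²×N² complex matrices (rows and columns indexed by Fin N × Fin N, Kraus operators of an arbitrary trace-preserving channel ε acting on the sender's joint system A⊗a) satisfying Σ_{t∈Fin K} (E_t)† E_t = 1_{N²}. Define ρ_out := Σ_{n,m∈Fin N} W_{n,m} · TrAa[ Σ_{t∈Fin K} (E_t ⊗ 1_N)(P_{n,m} ⊗ 1_N)(ρ ⊗ Ψ₀)(P_{n,m} ⊗ 1_N)((E_t)† ⊗ 1_N) ] · (W_{n,m})†, where P_{n,m} = ψ_{n,m}(ψ_{n,m})† is the Bell projection on A⊗a, ρ ⊗ Ψ₀ is the N³×N³ matrix with entries (ρ ⊗ Ψ₀)_{(a,b,c),(a',b',c')} = ρ_{a,a'}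 · (Ψ₀)_{(b,c),(b',c')} (tensor factor order A, a, b), and TrAa denotes the partial trace over the first two factors, (TrAa X)_{c,c'} = Σ_{a,b∈Fin N} X_{(a,b,c),(a,b,c')}. Then ρ_out = ρ: the teleportation protocol transmits every state faithfully and deterministically, whatever the noisy channel ε. -/
open Matrix

/-- Universality of quantum teleportation (Eq. (5) of the paper): for any input
state `ρ` and any trace-preserving channel `ε` (Kraus operators `E t`) acting on the
sender's joint system A⊗a, the teleportation protocol — Bell measurement `P n m` on
A⊗a, transmission of the measured system through `ε`, discarding A⊗a, and correction
`W n m` on b — returns exactly `ρ`. Here `lift X = X ⊗ 1` embeds operators on A⊗a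
into A⊗a⊗b, `ρΨ = ρ ⊗ Ψ₀` is the initial tripartite state, and `trAa` is the partial
trace over the first two factors. -/
theorem teleportation_universal
    (N K : ℕ) (hN : 2 ≤ N) (hK : 1 ≤ K)
    (ω : ℂ) (hω : ω = Complex.exp (2 * Real.pi * Complex.I / N))
    (ψ₀ : Fin N × Fin N → ℂ)
    (hψ₀ : ∀ i j : Fin N, ψ₀ (i, j) = (1 / (Real.sqrt N : ℂ)) * (if i = j then 1 else 0))
    (Ψ₀ : Matrix (Fin N × Fin N) (Fin N × Fin N) ℂ)
    (hΨ₀ : ∀ q q' : Fin N × Fin N, Ψ₀ q q' = ψ₀ q * (starRingEnd ℂ) (ψ₀ q'))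
    (ψ : Fin N → Fin N → Fin N × Fin N → ℂ)
    (hψ : ∀ n m k k' : Fin N,
      ψ n m (k, k') = (1 / (Real.sqrt N : ℂ)) * ω ^ ((k : ℕ) * (n : ℕ)) *
        (if k' = k + m then 1 else 0))
    (P : Fin N → Fin N → Matrix (Fin N × Fin N) (Fin N × Fin N) ℂ)
    (hP : ∀ (n m : Fin N) (q q' : Fin N × Fin N),
      P n m q q' = ψ n m q * (starRingEnd ℂ) (ψ n m q'))
    (W : Fin N → Fin N → Matrix (Fin N) (Fin N) ℂ)
    (hW : ∀ n m k k' : Fin N,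
      W n m k k' = ω ^ ((k : ℕ) * (n : ℕ)) * (if k' = k + m then 1 else 0))
    (E : Fin K → Matrix (Fin N × Fin N) (Fin N × Fin N) ℂ)
    (hE : ∑ t : Fin K, (E t)ᴴ * E t = 1)
    (ρ : Matrix (Fin N) (Fin N) ℂ)
    (lift : Matrix (Fin N × Fin N) (Fin N × Fin N) ℂ →
      Matrix (Fin N × Fin N × Fin N) (Fin N × Fin N × Fin N) ℂ)
    (hlift : ∀ (X : Matrix (Fin N × Fin N) (Fin N × Fin N) ℂ)
      (p q : Fin N × Fin N × Fin N),
      lift X p q = X (p.1, p.2.1) (q.1, q.2.1) * (if p.2.2 = q.2.2 then 1 else 0))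
    (ρΨ : Matrix (Fin N × Fin N × Fin N) (Fin N × Fin N × Fin N) ℂ)
    (hρΨ : ∀ p q : Fin N × Fin N × Fin N,
      ρΨ p q = ρ p.1 q.1 * Ψ₀ (p.2.1, p.2.2) (q.2.1, q.2.2))
    (trAa : Matrix (Fin N × Fin N × Fin N) (Fin N × Fin N × Fin N) ℂ →
      Matrix (Fin N) (Fin N) ℂ)
    (htrAa : ∀ (X : Matrix (Fin N × Fin N × Fin N) (Fin N × Fin N × Fin N) ℂ)
      (c c' : Fin N), trAa X c c' = ∑ a : Fin N, ∑ b : Fin N, X (a, b, c) (a, b, c')) :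
    ∑ n : Fin N, ∑ m : Fin N,
      W n m *
        trAa (∑ t : Fin K,
          lift (E t) * lift (P n m) * ρΨ * lift (P n m) * lift ((E t)ᴴ)) *
        (W n m)ᴴ = ρ := by
  -- basic scalar facts
  haveI : NeZero N := ⟨by omega⟩
  have hNpos : 0 < (N : ℝ) := by positivity
  have hN0 : (N : ℂ) ≠ 0 := Nat.cast_ne_zero.mpr (by omega)
  have hs : ((Real.sqrt N : ℝ) : ℂ) * ((Real.sqrt N : ℝ) : ℂ) = (N : ℂ) := by
    norm_cast
    exact Real.mul_self_sqrt (Nat.cast_nonneg N)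
  have hs0 : ((Real.sqrt N : ℝ) : ℂ) ≠ 0 := by
    intro h
    rw [h, mul_zero] at hs
    exact hN0 hs.symm
  have hωc : ω * (starRingEnd ℂ) ω = 1 := by
    have hz : (starRingEnd ℂ) (2 * Real.pi * Complex.I / N)
        = -(2 * Real.pi * Complex.I / N) := by
      simp [map_div₀, Complex.conj_I]
      rw [map_ofNat]
      ring
    rw [hω, ← Complex.exp_conj, hz, ← Complex.exp_add, add_neg_cancel, Complex.exp_zero]
  have hωpow : ∀ e : ℕ, ω ^ e * ((starRingEnd ℂ) ω) ^ e = 1 := by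
    intro e
    rw [← mul_pow, hωc, one_pow]
  -- lift is multiplicative
  have hlift_mul : ∀ X Y : Matrix (Fin N × Fin N) (Fin N × Fin N) ℂ,
      lift X * lift Y = lift (X * Y) := by
    intro X Y
    ext p q
    simp only [hlift, mul_apply, Fintype.sum_prod_type, ite_mul, mul_ite, zero_mul,
      mul_zero, Finset.sum_ite_eq, Finset.sum_ite_eq', Finset.mem_univ, if_true,
      Finset.sum_mul, Finset.mul_sum, mul_assoc]
    split_ifs <;> simp
  -- moving a lifted operator around the partial trace
  have hswap : ∀ (A : Matrix (Fin N × Fin N) (Fin N × Fin N) ℂ)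
      (Y : Matrix (Fin N × Fin N × Fin N) (Fin N × Fin N × Fin N) ℂ),
      trAa (lift A * Y) = trAa (Y * lift A) := by
    have swap4 : ∀ (h : Fin N → Fin N → Fin N → Fin N → ℂ),
        (∑ a : Fin N, ∑ b : Fin N, ∑ x : Fin N, ∑ y : Fin N, h a b x y)
        = ∑ x : Fin N, ∑ y : Fin N, ∑ a : Fin N, ∑ b : Fin N, h a b x y := by
      intro h
      calc (∑ a : Fin N, ∑ b : Fin N, ∑ x : Fin N, ∑ y : Fin N, h a b x y)
          = ∑ a : Fin N, ∑ x : Fin N, ∑ b : Fin N, ∑ y : Fin N, h a b x y :=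
            Finset.sum_congr rfl fun a _ => Finset.sum_comm ..
        _ = ∑ x : Fin N, ∑ a : Fin N, ∑ b : Fin N, ∑ y : Fin N, h a b x y :=
            Finset.sum_comm ..
        _ = ∑ x : Fin N, ∑ a : Fin N, ∑ y : Fin N, ∑ b : Fin N, h a b x y :=
            Finset.sum_congr rfl fun x _ => Finset.sum_congr rfl fun a _ =>
              Finset.sum_comm ..
        _ = ∑ x : Fin N, ∑ y : Fin N, ∑ a : Fin N, ∑ b : Fin N, h a b x y :=
            Finset.sum_congr rfl fun x _ => Finset.sum_comm ..
    intro A Y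
    ext c c'
    rw [htrAa, htrAa]
    simp only [mul_apply, hlift, Fintype.sum_prod_type, ite_mul, mul_ite, zero_mul,
      mul_zero, Finset.sum_ite_eq, Finset.sum_ite_eq', Finset.mem_univ, if_true,
      mul_one, one_mul]
    refine (swap4 _).trans ?_
    exact Finset.sum_congr rfl fun _ _ => Finset.sum_congr rfl fun _ _ =>
      Finset.sum_congr rfl fun _ _ => Finset.sum_congr rfl fun _ _ => mul_comm _ _
  -- the Bell projections are idempotent
  have hPP : ∀ n m : Fin N, P n m * P n m = P n m := by
    intro n m
    have hnorm : ∑ r : Fin N × Fin N, (starRingEnd ℂ) (ψ n m r) * ψ n m r = 1 := by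
      rw [Fintype.sum_prod_type]
      simp only [hψ, _root_.map_mul, map_pow, apply_ite (starRingEnd ℂ), _root_.map_one,
        _root_.map_zero, map_div₀, Complex.conj_ofReal, mul_ite, ite_mul, mul_zero,
        zero_mul, Finset.sum_ite_eq', Finset.mem_univ, if_true, mul_one, one_mul]
      have hterm : ∀ x : Fin N,
          1 / (Real.sqrt N : ℂ) * (starRingEnd ℂ) ω ^ ((x : ℕ) * (n : ℕ)) *
            (1 / (Real.sqrt N : ℂ) * ω ^ ((x : ℕ) * (n : ℕ))) = (N : ℂ)⁻¹ := by
        intro x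
        have h1 := hωpow ((x : ℕ) * (n : ℕ))
        have h2 : (1 / ((Real.sqrt N : ℝ) : ℂ)) * (1 / ((Real.sqrt N : ℝ) : ℂ))
            = (N : ℂ)⁻¹ := by
          rw [div_mul_div_comm, one_mul, hs, one_div]
        linear_combination ((starRingEnd ℂ) ω ^ ((x : ℕ) * (n : ℕ)) *
          ω ^ ((x : ℕ) * (n : ℕ))) * h2 + (N : ℂ)⁻¹ * h1
      simp only [hterm, Finset.sum_const, Finset.card_univ, Fintype.card_fin,
        nsmul_eq_mul]
      field_simp
    ext q q'
    rw [mul_apply]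
    simp only [hP]
    have hr : ∀ r : Fin N × Fin N,
        ψ n m q * (starRingEnd ℂ) (ψ n m r) * (ψ n m r * (starRingEnd ℂ) (ψ n m q'))
        = ψ n m q * (starRingEnd ℂ) (ψ n m q') * ((starRingEnd ℂ) (ψ n m r) * ψ n m r) :=
      fun r => by ring
    simp only [hr, ← Finset.mul_sum, hnorm, mul_one]
  -- reduction of the noisy channel using the Kraus condition
  have key : ∀ n m : Fin N,
      trAa (∑ t : Fin K,
        lift (E t) * lift (P n m) * ρΨ * lift (P n m) * lift ((E t)ᴴ))
      = trAa (lift (P n m) * ρΨ) := by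
    intro n m
    have h1 : ∀ t : Fin K,
        lift (E t) * lift (P n m) * ρΨ * lift (P n m) * lift ((E t)ᴴ)
        = lift (E t * P n m) * (ρΨ * lift (P n m * (E t)ᴴ)) := by
      intro t
      rw [← hlift_mul, ← hlift_mul]
      simp only [mul_assoc]
    have h2 : ∀ t : Fin K,
        trAa (lift (E t * P n m) * (ρΨ * lift (P n m * (E t)ᴴ)))
        = trAa (lift (P n m * (E t)ᴴ * (E t * P n m)) * ρΨ) := by
      intro t
      rw [hswap, mul_assoc, hlift_mul, ← hswap]
    have h3 : (∑ t : Fin K, P n m * (E t)ᴴ * (E t * P n m)) = P n m := by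
      have : ∑ t : Fin K, P n m * (E t)ᴴ * (E t * P n m)
          = P n m * (∑ t : Fin K, (E t)ᴴ * E t) * P n m := by
        rw [Finset.mul_sum, Finset.sum_mul]
        congr 1
        funext t
        simp only [mul_assoc]
      rw [this, hE, mul_one, hPP]
    have hlin : ∀ (F : Fin K → Matrix (Fin N × Fin N × Fin N) (Fin N × Fin N × Fin N) ℂ),
        trAa (∑ t, F t) = ∑ t, trAa (F t) := by
      intro F
      ext c c'
      simp only [htrAa, Matrix.sum_apply]
      exact (Finset.sum_congr rfl fun a _ => Finset.sum_comm ..).trans (Finset.sum_comm ..)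
    have hliftsum : (∑ t : Fin K, lift (P n m * (E t)ᴴ * (E t * P n m)))
        = lift (∑ t : Fin K, P n m * (E t)ᴴ * (E t * P n m)) := by
      ext p q
      simp only [Matrix.sum_apply, hlift, Matrix.sum_apply, Finset.sum_mul]
    calc trAa (∑ t : Fin K,
        lift (E t) * lift (P n m) * ρΨ * lift (P n m) * lift ((E t)ᴴ))
        = ∑ t, trAa (lift (P n m * (E t)ᴴ * (E t * P n m)) * ρΨ) := by
          rw [hlin]
          congr 1
          funext t
          rw [h1, h2]
      _ = trAa (lift (P n m) * ρΨ) := by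
          rw [← hlin]
          congr 1
          rw [← Finset.sum_mul, hliftsum, h3]
  -- the main computation for a single measurement outcome
  have hMain : ∀ (n m k k' : Fin N),
      (W n m * trAa (lift (P n m) * ρΨ) * (W n m)ᴴ) k k'
      = ((N : ℂ) * (N : ℂ))⁻¹ * ρ k k' := by
    intro n m k k'
    have hshift : ∀ x y z : Fin N, (x = y + z) ↔ (y = x - z) := by
      intro x y z
      rw [eq_sub_iff_add_eq, eq_comm]
    simp only [mul_apply, conjTranspose_apply, htrAa, hlift, hρΨ, hΨ₀, hψ₀, hP, hψ, hW,
      _root_.map_mul, map_pow, apply_ite (starRingEnd ℂ), _root_.map_one, _root_.map_zero,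
      map_div₀, Complex.conj_ofReal, Fintype.sum_prod_type, mul_ite, ite_mul, mul_zero,
      zero_mul, mul_one, one_mul, Finset.sum_ite_eq, Finset.sum_ite_eq',
      Finset.sum_ite_irrel, Finset.sum_const_zero, Finset.mem_univ, if_true]
    simp only [Complex.star_def, apply_ite (starRingEnd ℂ), map_pow, _root_.map_zero,
      add_left_inj, mul_ite, ite_mul, mul_zero, zero_mul, Finset.sum_ite_eq,
      Finset.sum_ite_eq', Finset.sum_ite_irrel, Finset.sum_const_zero,
      Finset.mem_univ, if_true]
    have hA := hωpow ((k : ℕ) * (n : ℕ))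
    have hB := hωpow ((k' : ℕ) * (n : ℕ))
    have hC : (1 / ((Real.sqrt N : ℝ) : ℂ)) * (1 / ((Real.sqrt N : ℝ) : ℂ))
        = (N : ℂ)⁻¹ := by
      rw [div_mul_div_comm, one_mul, hs, one_div]
    have hNN : ((N : ℂ) * (N : ℂ))⁻¹ = (N : ℂ)⁻¹ * (N : ℂ)⁻¹ := by
      rw [mul_inv]
    rw [hNN]
    linear_combination (ρ k k' * (ω ^ ((k' : ℕ) * (n : ℕ)) *
        ((starRingEnd ℂ) ω) ^ ((k' : ℕ) * (n : ℕ))) *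
        ((1 / ((Real.sqrt N : ℝ) : ℂ)) * (1 / ((Real.sqrt N : ℝ) : ℂ))) *
        ((1 / ((Real.sqrt N : ℝ) : ℂ)) * (1 / ((Real.sqrt N : ℝ) : ℂ)))) * hA +
      (ρ k k' * ((1 / ((Real.sqrt N : ℝ) : ℂ)) * (1 / ((Real.sqrt N : ℝ) : ℂ))) *
        ((1 / ((Real.sqrt N : ℝ) : ℂ)) * (1 / ((Real.sqrt N : ℝ) : ℂ)))) * hB +
      (ρ k k' * ((1 / ((Real.sqrt N : ℝ) : ℂ)) * (1 / ((Real.sqrt N : ℝ) : ℂ)) +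
        (N : ℂ)⁻¹)) * hC
  -- putting everything together
  ext k k'
  simp only [Matrix.sum_apply]
  calc ∑ n : Fin N, ∑ m : Fin N,
      (W n m * trAa (∑ t : Fin K,
        lift (E t) * lift (P n m) * ρΨ * lift (P n m) * lift ((E t)ᴴ)) * (W n m)ᴴ) k k'
      = ∑ n : Fin N, ∑ m : Fin N, ((N : ℂ) * (N : ℂ))⁻¹ * ρ k k' := by
        refine Finset.sum_congr rfl fun n _ => Finset.sum_congr rfl fun m _ => ?_
        rw [key, hMain]
    _ = ρ k k' := by
        rw [Finset.sum_const, Finset.sum_const]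
        simp only [Finset.card_univ, Fintype.card_fin, smul_smul, nsmul_eq_mul]
        rw [← mul_assoc]
        field_simp
end

section
/- Fix N ≥ 1 and K ≥ 1, let (E_t)_{t∈Fin K} be N×N complex matrices, and let R be their Choi–Jamiolkowski matrix, R_{(i,j),(i',j')} = (1/N) · Σ_{t∈Fin K} (E_t)_{i,j} · conj((E_t)_{i',j'}). Then (a) Matrix.rank R ≤ K, and (b) there exists a family (F_s)_{s∈Fin r} of N×N complex matrices with r = Matrix.rank R whose Choi–Jamiolkowski matrix equals R (hence representing the same channel with the minimal number of Kraus operators). In particular, the minimal number of Kraus operators representing a channel (its rank) equals the rank of its Choi matrix, and a channel has maximal rank N² exactly when its Choi matrix is positive definite. -/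
open Matrix
open scoped InnerProductSpace

private lemma rank_smul_aux {m n : Type*} [Fintype n] {c : ℂ} (hc : c ≠ 0)
    (A : Matrix m n ℂ) : (c • A).rank = A.rank := by
  have h : (c • A).mulVecLin = c • A.mulVecLin := by
    ext v i
    simp [Matrix.mulVecLin, Matrix.smul_mulVec]
  rw [Matrix.rank, h, LinearMap.range_smul _ _ hc, Matrix.rank]

private lemma gram_factor {ι E : Type*} [Fintype ι] [NormedAddCommGroup E]
    [InnerProductSpace ℂ E] [FiniteDimensional ℂ E] (v : ι → E) :
    ∃ c : ι → Fin (Module.finrank ℂ (Submodule.span ℂ (Set.range v))) → ℂ,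
      ∀ p q : ι, ⟪v q, v p⟫_ℂ = ∑ s, c p s * (starRingEnd ℂ) (c q s) := by
  set W := Submodule.span ℂ (Set.range v) with hW
  let b : OrthonormalBasis (Fin (Module.finrank ℂ W)) ℂ W := stdOrthonormalBasis ℂ W
  let vW : ι → W := fun p => ⟨v p, Submodule.subset_span ⟨p, rfl⟩⟩
  refine ⟨fun p s => ⟪b s, vW p⟫_ℂ, fun p q => ?_⟩
  have h1 : ∑ s, ⟪vW q, b s⟫_ℂ * ⟪b s, vW p⟫_ℂ = ⟪vW q, vW p⟫_ℂ :=
    b.sum_inner_mul_inner (vW q) (vW p)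
  have h2 : ⟪vW q, vW p⟫_ℂ = ⟪v q, v p⟫_ℂ := rfl
  rw [← h2, ← h1]
  refine Finset.sum_congr rfl (fun s _ => ?_)
  have hconj : ⟪vW q, b s⟫_ℂ = (starRingEnd ℂ) ⟪b s, vW q⟫_ℂ := (inner_conj_symm _ _).symm
  rw [hconj]
  ring

set_option maxHeartbeats 1000000 in
/-- (a) The rank of the Choi–Jamiolkowski matrix `R` of a Kraus family `(E t)_{t < K}`
is at most `K`; (b) there is a Kraus family of size exactly `Matrix.rank R` with the
same Choi matrix (hence representing the same channel with the minimal number of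
Kraus operators). -/
theorem choi_rank_minimal_kraus
    (N K : ℕ) (hN : 1 ≤ N) (hK : 1 ≤ K)
    (E : Fin K → Matrix (Fin N) (Fin N) ℂ)
    (R : Matrix (Fin N × Fin N) (Fin N × Fin N) ℂ)
    (hR : ∀ p q : Fin N × Fin N,
      R p q = (1 / (N : ℂ)) * ∑ t : Fin K, E t p.1 p.2 * (starRingEnd ℂ) (E t q.1 q.2)) :
    R.rank ≤ K ∧
      ∃ F : Fin R.rank → Matrix (Fin N) (Fin N) ℂ,
        ∀ p q : Fin N × Fin N,
          R p q = (1 / (N : ℂ)) *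
            ∑ s : Fin R.rank, F s p.1 p.2 * (starRingEnd ℂ) (F s q.1 q.2) := by
  classical
  set M : Matrix (Fin N × Fin N) (Fin K) ℂ := Matrix.of (fun p t => E t p.1 p.2) with hM
  have hNne : (N : ℂ) ≠ 0 := Nat.cast_ne_zero.mpr (by omega)
  have hA : R = ((N : ℂ))⁻¹ • (M * Mᴴ) := by
    ext p q
    rw [hR p q]
    simp [Matrix.mul_apply, Matrix.conjTranspose_apply, hM, one_div, Finset.mul_sum]
  have hrank : R.rank = M.rank := by
    open scoped ComplexOrder in
    rw [hA, rank_smul_aux (inv_ne_zero hNne), Matrix.rank_self_mul_conjTranspose]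
  -- the row vectors in Euclidean space
  let e : EuclideanSpace ℂ (Fin K) ≃ₗ[ℂ] (Fin K → ℂ) := WithLp.linearEquiv 2 ℂ (Fin K → ℂ)
  let w : (Fin N × Fin N) → EuclideanSpace ℂ (Fin K) := fun p => e.symm (M p)
  have hWrank : Module.finrank ℂ (Submodule.span ℂ (Set.range w)) = M.rank := by
    rw [Matrix.rank_eq_finrank_span_row]
    rw [← LinearEquiv.finrank_map_eq e]
    have hmap : Submodule.map (e : EuclideanSpace ℂ (Fin K) →ₗ[ℂ] (Fin K → ℂ))
          (Submodule.span ℂ (Set.range w))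
        = Submodule.span ℂ (Set.range M) := by
      rw [Submodule.map_span, ← Set.range_comp]
      have h2 : (⇑(e : EuclideanSpace ℂ (Fin K) →ₗ[ℂ] (Fin K → ℂ)) ∘ w) = M := by
        funext p
        simp only [Function.comp_apply, w]
        exact e.apply_symm_apply (M p)
      rw [h2]
    rw [hmap]
    rfl
  have hr : R.rank = Module.finrank ℂ (Submodule.span ℂ (Set.range w)) :=
    hrank.trans hWrank.symm
  constructor
  · -- part (a)
    calc R.rank = M.rank := hrank
    _ ≤ Fintype.card (Fin K) := Matrix.rank_le_card_width M
    _ = K := Fintype.card_fin K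
  · -- part (b)
    obtain ⟨c, hc⟩ := gram_factor w
    refine ⟨fun s => Matrix.of (fun i j => c (i, j) (Fin.cast hr s)), fun p q => ?_⟩
    have hsum : ∑ s : Fin R.rank, c p (Fin.cast hr s) * (starRingEnd ℂ) (c q (Fin.cast hr s))
        = ∑ s, c p s * (starRingEnd ℂ) (c q s) :=
      Fintype.sum_equiv (finCongr hr) _ _ (fun s => rfl)
    have hinner : ⟪w q, w p⟫_ℂ
        = ∑ t : Fin K, E t p.1 p.2 * (starRingEnd ℂ) (E t q.1 q.2) := by
      rw [PiLp.inner_apply]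
      refine Finset.sum_congr rfl (fun t _ => ?_)
      simp [w, e, hM, mul_comm]
    rw [hR p q]
    congr 1
    simp only [Matrix.of_apply, Prod.mk.eta]
    rw [hsum, ← hc p q, hinner]
end
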